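/- arXiv:1103.5894 — 4 statements merged into one kernel-verified Lean document; each statement's English description precedes it below -/
import Mathlib

section
/- Let W satisfy conditions (A.3) and (A.4) with constants M > 0, 0 ≤ q < 1/2, p < 1, and let μ(W) = ∫₀¹ W(x) log(1/x) dx. Then the Riemann sum T_n^{(1,1)} = (1/(k−1)) Σ_{i=1}^{k−1} W(i/k) log(k/i) satisfies T_n^{(1,1)} = μ(W) + O(k^{q−1} log k) as k → ∞; that is, there exists a constant C such that |T_n^{(1,1)} − μ(W)| ≤ C k^{q−1} log k for all k ≥ 2. -/
open MeasureTheory ProbabilityTheory Filter Set Topology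

/-- `K_ρ(λ) = ∫₁^λ u^{ρ-1} du`. -/
noncomputable def Kfun (ρ l : ℝ) : ℝ := ∫ u in (1:ℝ)..l, u ^ (ρ - 1)

/-- A function is slowly varying at infinity. -/
def SlowlyVarying (ℓ : ℝ → ℝ) : Prop :=
  ∀ l : ℝ, 0 < l → Tendsto (fun t => ℓ (l * t) / ℓ t) atTop (𝓝 1)

/-- Second-order condition (A.2): `log(ℓ(λt)/ℓ(t)) ∼ b(t) K_ρ(λ)` locally uniformly in `λ > 1`,
with `b(t) → 0`. -/
def SecondOrder (ℓ b : ℝ → ℝ) (ρ : ℝ) : Prop :=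
  Tendsto b atTop (𝓝 0) ∧
  ∀ a c : ℝ, 1 < a → a ≤ c → ∀ ε : ℝ, 0 < ε →
    ∀ᶠ t : ℝ in atTop, ∀ l ∈ Set.Icc a c,
      |Real.log (ℓ (l * t) / ℓ t) - b t * Kfun ρ l| ≤ ε * |b t * Kfun ρ l|

/-- Failure rate `H = −log(1−F)`. -/
noncomputable def hazard (F : ℝ → ℝ) (x : ℝ) : ℝ := - Real.log (1 - F x)

/-- Generalized inverse of the failure rate, `H⁻(t) = inf{x : H(x) ≥ t}`. -/
noncomputable def hazardInv (F : ℝ → ℝ) (t : ℝ) : ℝ := sInf {x : ℝ | t ≤ hazard F x}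

/-- `i`-th order statistic of the sample `x 1, …, x n`. -/
noncomputable def orderStat (n : ℕ) (x : ℕ → ℝ) (i : ℕ) : ℝ :=
  sInf {t : ℝ | i ≤ ((Finset.Icc 1 n).filter (fun j => x j ≤ t)).card}

/-- Intermediate sequence: `k_n → ∞` and `k_n/n → 0`. -/
def IsIntermediate (k : ℕ → ℕ) : Prop :=
  Tendsto k atTop atTop ∧ Tendsto (fun n => (k n : ℝ) / n) atTop (𝓝 0)

/-- `μ(W) = ∫₀¹ W(x) log(1/x) dx`. -/
noncomputable def muW (W : ℝ → ℝ) : ℝ := ∫ x in (0:ℝ)..1, W x * Real.log (1 / x)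

/-- `σ²(W) = ∫₀¹∫₀¹ W(x)W(y)(min(x,y)−xy)/(xy) dx dy`. -/
noncomputable def sigmaSqW (W : ℝ → ℝ) : ℝ :=
  ∫ x in (0:ℝ)..1, ∫ y in (0:ℝ)..1, W x * W y * (min x y - x * y) / (x * y)

/-- `‖ε‖_{n,∞} = max_{1 ≤ i ≤ k−1} |ε_i|`. -/
noncomputable def epsNorm (k : ℕ) (e : ℕ → ℝ) : ℝ :=
  sSup ((fun i => |e i|) '' Set.Icc 1 (k - 1))

/-- The estimator `θ̂_n(α)` built from weights `α` and the sample `x`. -/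
noncomputable def thetaHat (n k : ℕ) (α : ℕ → ℝ) (x : ℕ → ℝ) : ℝ :=
  (∑ i ∈ Finset.Icc 1 (k - 1), α i *
      (Real.log (orderStat n x (n - i + 1)) - Real.log (orderStat n x (n - k + 1)))) /
  (∑ i ∈ Finset.Icc 1 (k - 1), α i *
      (Real.log (Real.log ((n : ℝ) / i)) - Real.log (Real.log ((n : ℝ) / k))))

/-- Convergence in distribution of real random variables towards the law `μ`. -/
def TendstoInDistribution {Ω : Type*} [MeasurableSpace Ω] (P : Measure Ω)
    (Y : ℕ → Ω → ℝ) (μ : Measure ℝ) : Prop :=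
  ∀ f : BoundedContinuousFunction ℝ ℝ,
    Tendsto (fun n => ∫ ω, f (Y n ω) ∂P) atTop (𝓝 (∫ x, f x ∂μ))

/-- The family `X` is i.i.d. with common cumulative distribution function `F`. -/
def IIDWithCdf {Ω : Type*} [MeasurableSpace Ω] (P : Measure Ω) (X : ℕ → Ω → ℝ)
    (F : ℝ → ℝ) : Prop :=
  (∀ i, Measurable (X i)) ∧ iIndepFun X P ∧
  ∀ i t, P {ω | X i ω ≤ t} = ENNReal.ofReal (F t)

/-- Cdf of the standard exponential distribution. -/
noncomputable def ExpCdf (t : ℝ) : ℝ := if 0 ≤ t then 1 - Real.exp (-t) else 0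

/-- Boundedness in probability (`O_P(1)`). -/
def BoundedInProbability {Ω : Type*} [MeasurableSpace Ω] (P : Measure Ω)
    (Y : ℕ → Ω → ℝ) : Prop :=
  ∀ δ : ℝ, 0 < δ → ∃ C : ℝ, ∀ᶠ n in atTop, (P {ω | C < |Y n ω|}).toReal < δ

section TRSaux
open MeasureTheory Filter Set intervalIntegral

lemma TRS_ii_rpow_log {a : ℝ} (ha : -1 < a) :
    IntervalIntegrable (fun x : ℝ => x ^ a * Real.log (1/x)) volume 0 1 := by
  have ht : (0:ℝ) < (a+1)/2 := by linarith
  rw [intervalIntegrable_iff_integrableOn_Ioc_of_le zero_le_one]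
  have hmeas : AEStronglyMeasurable (fun x : ℝ => x ^ a * Real.log (1/x))
      (volume.restrict (Set.Ioc (0:ℝ) 1)) := by
    apply ContinuousOn.aestronglyMeasurable _ measurableSet_Ioc
    intro x hx
    exact ((Real.continuousAt_rpow_const x a (Or.inl (ne_of_gt hx.1))).continuousWithinAt).mul
      (((Real.continuousAt_log (by simp [ne_of_gt hx.1])).comp
        ((continuousAt_const.div continuousAt_id (ne_of_gt hx.1)))).continuousWithinAt)
  have hbound : IntegrableOn (fun x : ℝ => (2/(a+1)) * x ^ ((a-1)/2)) (Set.Ioc (0:ℝ) 1) volume := by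
    have := (intervalIntegrable_rpow' (a := 0) (b := 1) (r := (a-1)/2) (by linarith)).const_mul
      (2/(a+1))
    rwa [intervalIntegrable_iff_integrableOn_Ioc_of_le zero_le_one] at this
  refine Integrable.mono' hbound hmeas ?_
  filter_upwards [ae_restrict_mem measurableSet_Ioc] with x hx
  have hx0 : (0:ℝ) < x := hx.1
  have hlog0 : 0 ≤ Real.log (1/x) := Real.log_nonneg (by
    rw [le_div_iff₀ hx0]; simpa using hx.2)
  rw [Real.norm_eq_abs, abs_mul, abs_of_nonneg (Real.rpow_nonneg hx0.le a),
    abs_of_nonneg hlog0]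
  have h1 : Real.log (1/x) ≤ (1/x) ^ ((a+1)/2) / ((a+1)/2) :=
    Real.log_le_rpow_div (by positivity) ht
  have h2 : x ^ a * Real.log (1/x) ≤ x ^ a * ((1/x) ^ ((a+1)/2) / ((a+1)/2)) :=
    mul_le_mul_of_nonneg_left h1 (Real.rpow_nonneg hx0.le a)
  refine h2.trans (le_of_eq ?_)
  rw [one_div, Real.inv_rpow hx0.le, ← Real.rpow_neg hx0.le]
  rw [div_eq_mul_inv, ← mul_assoc, ← Real.rpow_add hx0,
    show a + -((a+1)/2) = (a-1)/2 by ring, show ((a+1)/2)⁻¹ = 2/(a+1) by rw [inv_div],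
    mul_comm]

lemma TRS_nonneg {a : ℝ} {x : ℝ} (hx : x ∈ Set.Icc (0:ℝ) 1) :
    0 ≤ x ^ a * Real.log (1/x) := by
  rcases eq_or_lt_of_le hx.1 with h|h
  · simp [← h]
  · exact mul_nonneg (Real.rpow_nonneg h.le a)
      (Real.log_nonneg (by rw [le_div_iff₀ h]; simpa using hx.2))

lemma TRS_tail (q : ℝ) (hq0 : 0 ≤ q) (hq1 : q < 1) :
    ∃ C : ℝ, ∀ k : ℕ, 2 ≤ k →
      ∫ x in (0:ℝ)..(1/(k:ℝ)), x ^ (-q) * Real.log (1/x) ≤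
        C * (k:ℝ) ^ (q-1) * Real.log k := by
  have hq' : (-1:ℝ) < -q := by linarith
  set Cq := ∫ y in (0:ℝ)..1, y ^ (-q) * Real.log (1/y) with hCq
  have hCq0 : 0 ≤ Cq := intervalIntegral.integral_nonneg zero_le_one fun x hx => TRS_nonneg hx
  have hlog2 : (0:ℝ) < Real.log 2 := Real.log_pos one_lt_two
  refine ⟨1/(1-q) + Cq / Real.log 2, fun k hk => ?_⟩
  have hK0 : (0:ℝ) < (k:ℝ) := by positivity
  have hK2 : (2:ℝ) ≤ (k:ℝ) := by exact_mod_cast hk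
  have hKlog : Real.log 2 ≤ Real.log k := Real.log_le_log two_pos hK2
  have hKlog0 : 0 < Real.log k := lt_of_lt_of_le hlog2 hKlog
  have hKne : (k:ℝ) ≠ 0 := ne_of_gt hK0
  -- change of variables
  have heq : Set.EqOn (fun x : ℝ => x ^ (-q) * Real.log (1/x))
      (fun x : ℝ => (k:ℝ) ^ q * (((k:ℝ)*x) ^ (-q) * Real.log ((k:ℝ)/((k:ℝ)*x))))
      (Set.uIcc (0:ℝ) (1/(k:ℝ))) := by
    intro x hx
    rw [Set.uIcc_of_le (by positivity)] at hx
    rcases eq_or_lt_of_le hx.1 with h|h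
    · simp [← h, Real.zero_rpow, mul_comm]
    · have : ((k:ℝ)*x) ^ (-q) = (k:ℝ)^(-q) * x ^ (-q) :=
        Real.mul_rpow hK0.le h.le
      simp only [this]
      rw [show (k:ℝ)/((k:ℝ)*x) = 1/x by field_simp]
      rw [← mul_assoc, ← mul_assoc, ← Real.rpow_add hK0]
      simp
  calc ∫ x in (0:ℝ)..(1/(k:ℝ)), x ^ (-q) * Real.log (1/x)
      = ∫ x in (0:ℝ)..(1/(k:ℝ)), (k:ℝ) ^ q * (((k:ℝ)*x) ^ (-q) * Real.log ((k:ℝ)/((k:ℝ)*x))) :=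
        intervalIntegral.integral_congr heq
    _ = (k:ℝ) ^ q * ∫ x in (0:ℝ)..(1/(k:ℝ)), (fun y => y ^ (-q) * Real.log ((k:ℝ)/y)) ((k:ℝ)*x) :=
        intervalIntegral.integral_const_mul _ _
    _ = (k:ℝ) ^ q * ((k:ℝ)⁻¹ • ∫ y in ((k:ℝ)*0)..((k:ℝ)*(1/(k:ℝ))), y ^ (-q) * Real.log ((k:ℝ)/y)) := by
        congr 1
        exact intervalIntegral.integral_comp_mul_left (fun y => y ^ (-q) * Real.log ((k:ℝ)/y)) hKne
    _ = (k:ℝ) ^ (q-1) * ∫ y in (0:ℝ)..1, y ^ (-q) * Real.log ((k:ℝ)/y) := by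
        rw [mul_zero, mul_one_div_cancel hKne, smul_eq_mul, ← mul_assoc,
          Real.rpow_sub hK0, Real.rpow_one, div_eq_mul_inv]
    _ ≤ (k:ℝ) ^ (q-1) * (Real.log k * (1/(1-q)) + Cq) := by
        have hKpow : (0:ℝ) ≤ (k:ℝ) ^ (q-1) := Real.rpow_nonneg hK0.le _
        refine mul_le_mul_of_nonneg_left ?_ hKpow
        have hint2 : IntervalIntegrable (fun y : ℝ => y ^ (-q) * Real.log k + y ^ (-q) * Real.log (1/y))
            volume 0 1 :=
          ((intervalIntegrable_rpow' hq').mul_const _).add (TRS_ii_rpow_log hq')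
        have hint1 : IntervalIntegrable (fun y : ℝ => y ^ (-q) * Real.log ((k:ℝ)/y)) volume 0 1 := by
          rw [intervalIntegrable_iff_integrableOn_Ioc_of_le zero_le_one] at hint2 ⊢
          refine hint2.congr ?_
          filter_upwards [ae_restrict_mem measurableSet_Ioc] with y hy
          have hy0 : (0:ℝ) < y := hy.1
          rw [← mul_add, ← Real.log_mul hKne (by positivity), mul_one_div]
        have hmono : ∫ y in (0:ℝ)..1, y ^ (-q) * Real.log ((k:ℝ)/y) ≤
            ∫ y in (0:ℝ)..1, (y ^ (-q) * Real.log k + y ^ (-q) * Real.log (1/y)) := by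
          refine intervalIntegral.integral_mono_on zero_le_one hint1 hint2 fun y hy => ?_
          rcases eq_or_lt_of_le hy.1 with h|h
          · simp only [← h]
            rcases eq_or_ne q 0 with h0|h0 <;>
              simp [h0, Real.zero_rpow, div_zero, Real.log_zero] <;> positivity
          · rw [← mul_add, ← Real.log_mul hKne (by positivity), mul_one_div]
        refine hmono.trans (le_of_eq ?_)
        rw [intervalIntegral.integral_add ((intervalIntegrable_rpow' hq').mul_const _)
          (TRS_ii_rpow_log hq'), intervalIntegral.integral_mul_const, ← hCq,
          integral_rpow (Or.inl hq')]
        rw [Real.one_rpow, Real.zero_rpow (by linarith : -q + 1 ≠ 0)]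
        ring_nf
    _ ≤ (1/(1-q) + Cq / Real.log 2) * (k:ℝ) ^ (q-1) * Real.log k := by
        have hKpow : (0:ℝ) ≤ (k:ℝ) ^ (q-1) := Real.rpow_nonneg hK0.le _
        have : Cq ≤ Cq / Real.log 2 * Real.log k := by
          rw [div_mul_eq_mul_div, le_div_iff₀ hlog2]
          exact mul_le_mul_of_nonneg_left hKlog hCq0
        nlinarith [mul_le_mul_of_nonneg_left this hKpow]

lemma TRS_g_contOn (M q p : ℝ) {s : Set ℝ} (hs : ∀ x ∈ s, (0:ℝ) < x) :
    ContinuousOn (fun x : ℝ => M * x ^ (-(p+q)) * Real.log (1/x) + M * x ^ (-(q+1))) s := by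
  intro x hx
  have hx0 := hs x hx
  have h1 : ContinuousWithinAt (fun x : ℝ => x ^ (-(p+q))) s x :=
    (Real.continuousAt_rpow_const x _ (Or.inl (ne_of_gt hx0))).continuousWithinAt
  have h2 : ContinuousWithinAt (fun x : ℝ => x ^ (-(q+1))) s x :=
    (Real.continuousAt_rpow_const x _ (Or.inl (ne_of_gt hx0))).continuousWithinAt
  have h3 : ContinuousWithinAt (fun x : ℝ => Real.log (1/x)) s x :=
    ((Real.continuousAt_log (by simp [ne_of_gt hx0])).comp
      (continuousAt_const.div continuousAt_id (ne_of_gt hx0))).continuousWithinAt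
  exact (((continuousWithinAt_const.mul h1).mul h3).add (continuousWithinAt_const.mul h2))

lemma TRS_mid (M q p : ℝ) (hM : 0 < M) (hq0 : 0 ≤ q) (hq1 : q < 1) (hp : p < 1) :
    ∃ C : ℝ, ∀ k : ℕ, 2 ≤ k →
      ∫ x in (1/(k:ℝ))..1, (M * x ^ (-(p+q)) * Real.log (1/x) + M * x ^ (-(q+1))) ≤
        C * (k:ℝ) ^ q * Real.log k := by
  have hlog2 : (0:ℝ) < Real.log 2 := Real.log_pos one_lt_two
  rcases eq_or_lt_of_le hq0 with hq2|hq2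
  · -- case q = 0
    set s : ℝ := max p 0 with hs
    have hs0 : 0 ≤ s := le_max_right _ _
    have hs1 : s < 1 := max_lt hp one_pos
    set Cs := ∫ y in (0:ℝ)..1, y ^ (-s) * Real.log (1/y) with hCs
    have hCs0 : 0 ≤ Cs := intervalIntegral.integral_nonneg zero_le_one fun x hx => TRS_nonneg hx
    refine ⟨M * Cs / Real.log 2 + M, fun k hk => ?_⟩
    have hK0 : (0:ℝ) < (k:ℝ) := by positivity
    have hK2 : (2:ℝ) ≤ (k:ℝ) := by exact_mod_cast hk
    have hKinv : (0:ℝ) < 1/(k:ℝ) := by positivity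
    have hKinv1 : 1/(k:ℝ) ≤ 1 := by rw [div_le_one hK0]; linarith
    have hKlog : Real.log 2 ≤ Real.log k := Real.log_le_log two_pos hK2
    have hKlog0 : 0 < Real.log k := lt_of_lt_of_le hlog2 hKlog
    have hgi : IntervalIntegrable
        (fun x : ℝ => M * x ^ (-(p+q)) * Real.log (1/x) + M * x ^ (-(q+1))) volume (1/(k:ℝ)) 1 :=
      (TRS_g_contOn M q p (fun x hx => by
        rw [Set.uIcc_of_le hKinv1] at hx; exact lt_of_lt_of_le hKinv hx.1)).intervalIntegrable
    have h1i : IntervalIntegrable (fun x : ℝ => M * (x ^ (-s) * Real.log (1/x)))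
        volume (1/(k:ℝ)) 1 :=
      ((TRS_ii_rpow_log (by linarith : (-1:ℝ) < -s)).mono_set
        (by rw [Set.uIcc_of_le hKinv1, Set.uIcc_of_le zero_le_one]
            exact Set.Icc_subset_Icc hKinv.le le_rfl)).const_mul M
    have h2i : IntervalIntegrable (fun x : ℝ => M * x⁻¹) volume (1/(k:ℝ)) 1 :=
      ((intervalIntegrable_inv (f := fun x : ℝ => x) (fun x hx => by
        rw [Set.uIcc_of_le hKinv1] at hx
        exact ne_of_gt (lt_of_lt_of_le hKinv hx.1)) continuousOn_id)).const_mul M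
    have hmono : ∫ x in (1/(k:ℝ))..1, (M * x ^ (-(p+q)) * Real.log (1/x) + M * x ^ (-(q+1))) ≤
        ∫ x in (1/(k:ℝ))..1, (M * (x ^ (-s) * Real.log (1/x)) + M * x⁻¹) := by
      refine intervalIntegral.integral_mono_on hKinv1 hgi (h1i.add h2i) fun x hx => ?_
      have hx0 : 0 < x := lt_of_lt_of_le hKinv hx.1
      have hlogx : 0 ≤ Real.log (1/x) :=
        Real.log_nonneg (by rw [le_div_iff₀ hx0]; simpa using hx.2)
      have h1 : x ^ (-(p+q)) ≤ x ^ (-s) := by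
        apply Real.rpow_le_rpow_of_exponent_ge hx0 hx.2
        have : p ≤ s := le_max_left _ _
        linarith
      have h2 : x ^ (-(q+1):ℝ) = x⁻¹ := by
        rw [← hq2]; norm_num [Real.rpow_neg_one]
      rw [h2, mul_assoc]
      have := mul_le_mul_of_nonneg_right h1 hlogx
      nlinarith
    refine hmono.trans ?_
    rw [intervalIntegral.integral_add h1i h2i, intervalIntegral.integral_const_mul,
      intervalIntegral.integral_const_mul, integral_inv_of_pos hKinv one_pos,
      one_div_one_div]
    have hCsle : ∫ x in (1/(k:ℝ))..1, x ^ (-s) * Real.log (1/x) ≤ Cs := by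
      rw [hCs]
      exact intervalIntegral.integral_mono_interval hKinv.le hKinv1 le_rfl
        (Filter.eventually_of_mem (ae_restrict_mem measurableSet_Ioc)
          (fun x hx => TRS_nonneg ⟨hx.1.le, hx.2⟩))
        (TRS_ii_rpow_log (by linarith : (-1:ℝ) < -s))
    have hq2' : (k:ℝ) ^ q = 1 := by rw [← hq2, Real.rpow_zero]
    rw [hq2']
    have : M * Cs ≤ M * Cs / Real.log 2 * Real.log k := by
      rw [div_mul_eq_mul_div, le_div_iff₀ hlog2]
      exact mul_le_mul_of_nonneg_left hKlog (by positivity)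
    nlinarith [mul_le_mul_of_nonneg_left hCsle hM.le]
  · -- case q > 0
    refine ⟨M * (1 + 1/Real.log 2) / q, fun k hk => ?_⟩
    have hK0 : (0:ℝ) < (k:ℝ) := by positivity
    have hK2 : (2:ℝ) ≤ (k:ℝ) := by exact_mod_cast hk
    have hKinv : (0:ℝ) < 1/(k:ℝ) := by positivity
    have hKinv1 : 1/(k:ℝ) ≤ 1 := by rw [div_le_one hK0]; linarith
    have hKlog : Real.log 2 ≤ Real.log k := Real.log_le_log two_pos hK2
    have hKlog0 : 0 < Real.log k := lt_of_lt_of_le hlog2 hKlog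
    have hgi : IntervalIntegrable
        (fun x : ℝ => M * x ^ (-(p+q)) * Real.log (1/x) + M * x ^ (-(q+1))) volume (1/(k:ℝ)) 1 :=
      (TRS_g_contOn M q p (fun x hx => by
        rw [Set.uIcc_of_le hKinv1] at hx; exact lt_of_lt_of_le hKinv hx.1)).intervalIntegrable
    have hhi : IntervalIntegrable
        (fun x : ℝ => M * (Real.log k + 1) * x ^ (-(q+1))) volume (1/(k:ℝ)) 1 :=
      (intervalIntegrable_rpow (Or.inr (by
        rw [Set.uIcc_of_le hKinv1]; exact fun h => absurd h.1 (by linarith)))).const_mul _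
    have hmono : ∫ x in (1/(k:ℝ))..1, (M * x ^ (-(p+q)) * Real.log (1/x) + M * x ^ (-(q+1))) ≤
        ∫ x in (1/(k:ℝ))..1, M * (Real.log k + 1) * x ^ (-(q+1)) := by
      refine intervalIntegral.integral_mono_on hKinv1 hgi hhi fun x hx => ?_
      have hx0 : 0 < x := lt_of_lt_of_le hKinv hx.1
      have hlogx : 0 ≤ Real.log (1/x) :=
        Real.log_nonneg (by rw [le_div_iff₀ hx0]; simpa using hx.2)
      have hlogxk : Real.log (1/x) ≤ Real.log k := by
        apply Real.log_le_log (by positivity)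
        rw [div_le_iff₀ hx0]
        calc (1:ℝ) = (k:ℝ) * (1/(k:ℝ)) := by field_simp
        _ ≤ (k:ℝ) * x := by exact mul_le_mul_of_nonneg_left hx.1 hK0.le
      have h1 : x ^ (-(p+q)) ≤ x ^ (-(q+1)) := by
        apply Real.rpow_le_rpow_of_exponent_ge hx0 hx.2
        linarith
      have hxq : (0:ℝ) ≤ x ^ (-(q+1)) := Real.rpow_nonneg hx0.le _
      have hxpq : (0:ℝ) ≤ x ^ (-(p+q)) := Real.rpow_nonneg hx0.le _
      have key : x ^ (-(p+q)) * Real.log (1/x) ≤ x ^ (-(q+1)) * Real.log k :=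
        mul_le_mul h1 hlogxk hlogx hxq
      nlinarith
    refine hmono.trans ?_
    rw [intervalIntegral.integral_const_mul, integral_rpow (Or.inr ⟨by intro h; norm_num at h; linarith,
      by rw [Set.uIcc_of_le hKinv1]; exact fun h => absurd h.1 (by linarith)⟩)]
    have hpow : ((1:ℝ) ^ (-(q+1)+1) - (1/(k:ℝ)) ^ (-(q+1)+1)) / (-(q+1)+1) = ((k:ℝ)^q - 1)/q := by
      rw [Real.one_rpow, one_div, Real.inv_rpow hK0.le, ← Real.rpow_neg hK0.le,
        show -(-(q+1)+1) = q by ring]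
      rw [show -(q+1)+1 = -q by ring]
      field_simp
      ring
    rw [hpow]
    have hkq1 : (1:ℝ) ≤ (k:ℝ)^q := by
      calc (1:ℝ) = (k:ℝ) ^ (0:ℝ) := (Real.rpow_zero _).symm
      _ ≤ (k:ℝ)^q := Real.rpow_le_rpow_of_exponent_le (by linarith) hq0
    have h1c : 1 ≤ (1/Real.log 2) * Real.log k := by
      rw [one_div, inv_mul_eq_div, le_div_iff₀ hlog2]
      linarith
    have key : M*(Real.log k+1)*((k:ℝ)^q-1) ≤ M*(1+1/Real.log 2)*((k:ℝ)^q)*Real.log k := by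
      nlinarith [mul_le_mul_of_nonneg_left h1c (Real.rpow_nonneg hK0.le q), hKlog0, hM,
        mul_le_mul_of_nonneg_left hkq1 hKlog0.le]
    calc M * (Real.log k + 1) * (((k:ℝ)^q - 1)/q)
        = (M*(Real.log k+1)*((k:ℝ)^q-1))/q := by ring
      _ ≤ (M*(1+1/Real.log 2)*((k:ℝ)^q)*Real.log k)/q := by
          exact (div_le_div_iff_of_pos_right hq2).mpr key
      _ = M*(1+1/Real.log 2)/q * (k:ℝ)^q * Real.log k := by ring

end TRSaux

/-- **Expansion of the Riemann sum `T_n^{(1,1)} = (1/(k−1)) Σ_{i=1}^{k−1} W(i/k) log(k/i)`.**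
Under (A.3)–(A.4), `T_n^{(1,1)} = μ(W) + O(k^{q−1} log k)`: there is a constant `C`
with `|T_n^{(1,1)} − μ(W)| ≤ C k^{q−1} log k` for all `k ≥ 2`. -/
theorem Tone_one_riemann_sum_expansion
    (W W' : ℝ → ℝ)
    (hA3deriv : ∀ x ∈ Set.Ioo (0:ℝ) 1, HasDerivAt W (W' x) x)
    (hA3cont : ContinuousOn W' (Set.Ioo (0:ℝ) 1))
    (M q p : ℝ) (hM : 0 < M) (hq0 : 0 ≤ q) (hq : q < 1/2) (hp : p < 1)
    (hA4W : ∀ x ∈ Set.Ioo (0:ℝ) 1, |W x| ≤ M * x ^ (-q))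
    (hA4W' : ∀ x ∈ Set.Ioo (0:ℝ) 1, |W' x| ≤ M * x ^ (-(p + q))) :
    ∃ C : ℝ, ∀ k : ℕ, 2 ≤ k →
      |(1 / ((k : ℝ) - 1)) * (∑ i ∈ Finset.Icc 1 (k - 1),
          W ((i : ℝ) / k) * Real.log ((k : ℝ) / i)) - muW W| ≤
        C * (k : ℝ) ^ (q - 1) * Real.log k := by
  have hq1 : q < 1 := by linarith
  set f : ℝ → ℝ := fun x => W x * Real.log (1/x) with hf
  set f' : ℝ → ℝ := fun x => W' x * Real.log (1/x) - W x / x with hf'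
  set g : ℝ → ℝ := fun x => M * x ^ (-(p+q)) * Real.log (1/x) + M * x ^ (-(q+1)) with hg
  -- continuity of W and f on (0,1)
  have hWc : ContinuousOn W (Set.Ioo (0:ℝ) 1) := fun x hx =>
    (hA3deriv x hx).continuousAt.continuousWithinAt
  have hlogc : ContinuousOn (fun x : ℝ => Real.log (1/x)) (Set.Ioo (0:ℝ) 1) := fun x hx =>
    ((Real.continuousAt_log (by simp [ne_of_gt hx.1])).comp
      (continuousAt_const.div continuousAt_id (ne_of_gt hx.1))).continuousWithinAt
  have hfc : ContinuousOn f (Set.Ioo (0:ℝ) 1) := hWc.mul hlogc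
  have hf'c : ContinuousOn f' (Set.Ioo (0:ℝ) 1) :=
    (hA3cont.mul hlogc).sub (hWc.div continuousOn_id (fun x hx => ne_of_gt hx.1))
  -- derivative of f
  have hderiv : ∀ t ∈ Set.Ioo (0:ℝ) 1, HasDerivAt f (f' t) t := by
    intro t ht
    have ht0 : t ≠ 0 := ne_of_gt ht.1
    have h1 : HasDerivAt (fun x : ℝ => Real.log (1/x)) (-(1/t)) t := by
      have hinv : HasDerivAt (fun x : ℝ => 1/x) (-(1/(t^2))) t := by
        simpa [one_div] using hasDerivAt_inv ht0
      have hlog : HasDerivAt Real.log (1/(1/t)) (1/t) := by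
        simpa [Real.hasDerivAt_log, one_div] using Real.hasDerivAt_log (one_div_ne_zero ht0)
      have := (hlog.comp t hinv)
      refine HasDerivAt.congr_deriv this ?_
      field_simp
    have := (hA3deriv t ht).mul h1
    refine HasDerivAt.congr_deriv this ?_
    simp only [hf']
    field_simp
    ring
  -- pointwise bound |f'| ≤ g on (0,1)
  have hf'bound : ∀ t ∈ Set.Ioo (0:ℝ) 1, |f' t| ≤ g t := by
    intro t ht
    have ht0 := ht.1
    have hlog0 : 0 ≤ Real.log (1/t) :=
      Real.log_nonneg (by rw [le_div_iff₀ ht0]; simpa using ht.2.le)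
    have h1 : |W' t * Real.log (1/t)| ≤ M * t ^ (-(p+q)) * Real.log (1/t) := by
      rw [abs_mul, abs_of_nonneg hlog0]
      exact mul_le_mul_of_nonneg_right (hA4W' t ht) hlog0
    have h2 : |W t / t| ≤ M * t ^ (-(q+1)) := by
      rw [abs_div, abs_of_pos ht0]
      rw [div_le_iff₀ ht0]
      calc |W t| ≤ M * t ^ (-q) := hA4W t ht
        _ = M * t ^ (-(q+1)) * t := by
            rw [mul_assoc, ← Real.rpow_add_one (ne_of_gt ht0)]
            norm_num
    calc |f' t| ≤ |W' t * Real.log (1/t)| + |W t / t| := abs_sub _ _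
      _ ≤ g t := by rw [hg]; dsimp only; linarith
  -- integrability of f on [0,1]
  have hbndi : IntervalIntegrable (fun x : ℝ => M * (x ^ (-q) * Real.log (1/x))) volume 0 1 :=
    (TRS_ii_rpow_log (by linarith : (-1:ℝ) < -q)).const_mul M
  have hfIoo : IntegrableOn f (Set.Ioo (0:ℝ) 1) volume := by
    refine Integrable.mono' (g := fun x : ℝ => M * (x ^ (-q) * Real.log (1/x)))
      ?_ (hfc.aestronglyMeasurable measurableSet_Ioo) ?_
    · rw [intervalIntegrable_iff_integrableOn_Ioc_of_le zero_le_one] at hbndi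
      exact hbndi.mono_set Set.Ioo_subset_Ioc_self
    · filter_upwards [ae_restrict_mem measurableSet_Ioo] with x hx
      have hlog0 : 0 ≤ Real.log (1/x) :=
        Real.log_nonneg (by rw [le_div_iff₀ hx.1]; simpa using hx.2.le)
      rw [Real.norm_eq_abs, hf]
      dsimp only
      rw [abs_mul, abs_of_nonneg hlog0, ← mul_assoc]
      exact mul_le_mul_of_nonneg_right (hA4W x hx) hlog0
  have hfi : IntervalIntegrable f volume 0 1 := by
    rw [intervalIntegrable_iff_integrableOn_Ioc_of_le zero_le_one,
      integrableOn_Ioc_iff_integrableOn_Ioo]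
    exact hfIoo
  obtain ⟨C2, hC2⟩ := TRS_mid M q p hM hq0 hq1 hp
  obtain ⟨C3, hC3⟩ := TRS_tail q hq0 hq1
  refine ⟨M + C2 + M * C3, fun k hk => ?_⟩
  -- basic positivity facts
  have hK0 : (0:ℝ) < (k:ℝ) := by positivity
  have hK2 : (2:ℝ) ≤ (k:ℝ) := by exact_mod_cast hk
  have hKinv : (0:ℝ) < 1/(k:ℝ) := by positivity
  have hKinv1 : 1/(k:ℝ) ≤ 1 := by rw [div_le_one hK0]; linarith
  have hKlog0 : 0 < Real.log k := Real.log_pos (by linarith)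
  have hKq : (0:ℝ) < (k:ℝ) ^ (q-1) := Real.rpow_pos_of_pos hK0 _
  -- the mesh
  set a : ℕ → ℝ := fun j => ((j:ℝ)+1)/(k:ℝ) with ha
  have ha0 : a 0 = 1/(k:ℝ) := by simp [ha]
  have hak : a (k-1) = 1 := by
    rw [ha]
    have : (((k:ℕ) - 1 : ℕ) : ℝ) = (k:ℝ) - 1 := by
      rw [Nat.cast_sub (by omega)]; norm_num
    dsimp only
    rw [this]
    field_simp
    ring
  have hapos : ∀ j, 0 < a j := fun j => by positivity
  have hamono : ∀ j, a j ≤ a (j+1) := fun j => by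
    rw [ha]; dsimp only; push_cast
    gcongr
    linarith
  have hKinvlt : 1/(k:ℝ) < 1 := by rw [div_lt_one hK0]; linarith
  have hale : ∀ j, j ≤ k-1 → a j ≤ 1 := by
    intro j hj
    rw [ha]; dsimp only; rw [div_le_one hK0]
    have h1 : (j:ℝ) ≤ ((k-1:ℕ):ℝ) := by exact_mod_cast hj
    rw [Nat.cast_sub (by omega), Nat.cast_one] at h1
    linarith
  have hfsub : ∀ b c : ℝ, b ∈ Set.Icc (0:ℝ) 1 → c ∈ Set.Icc (0:ℝ) 1 →
      IntervalIntegrable f volume b c := by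
    intro b c hb hc
    refine hfi.mono_set ?_
    rw [Set.uIcc_of_le zero_le_one]
    exact Set.uIcc_subset_Icc hb hc
  have hgint : ∀ b c : ℝ, 0 < b → b ≤ c → IntervalIntegrable g volume b c := by
    intro b c hb hbc
    exact (TRS_g_contOn M q p (fun x hx => by
      rw [Set.uIcc_of_le hbc] at hx; exact lt_of_lt_of_le hb hx.1)).intervalIntegrable
  -- per-interval estimate
  have hstep : ∀ j, j < k-1 → |(1/(k:ℝ)) * f (a j) - ∫ x in (a j)..(a (j+1)), f x| ≤
      (1/(k:ℝ)) * ∫ x in (a j)..(a (j+1)), g x := by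
    intro j hj
    have hj1 : j + 1 ≤ k - 1 := by omega
    have haj1 : a (j+1) ≤ 1 := hale (j+1) hj1
    have haj0 : 0 < a j := hapos j
    have hajm : a j ≤ a (j+1) := hamono j
    have hlen : a (j+1) - a j = 1/(k:ℝ) := by rw [ha]; dsimp only; push_cast; ring
    have hfij : IntervalIntegrable f volume (a j) (a (j+1)) :=
      hfsub _ _ ⟨haj0.le, hajm.trans haj1⟩ ⟨(hapos _).le, haj1⟩
    have hgij : IntervalIntegrable g volume (a j) (a (j+1)) := hgint _ _ haj0 hajm
    set G := ∫ x in (a j)..(a (j+1)), g x with hG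
    have hgpt : ∀ y ∈ Set.Icc (a j) (a (j+1)), 0 ≤ g y := by
      intro y hy
      have hy0 : 0 < y := lt_of_lt_of_le haj0 hy.1
      have hy1 : y ≤ 1 := hy.2.trans haj1
      have hlogy : 0 ≤ Real.log (1/y) :=
        Real.log_nonneg (by rw [le_div_iff₀ hy0]; simpa using hy1)
      rw [hg]; dsimp only
      have := Real.rpow_nonneg hy0.le (-(p+q))
      have := Real.rpow_nonneg hy0.le (-(q+1))
      positivity
    have hG0 : 0 ≤ G := intervalIntegral.integral_nonneg hajm hgpt
    have hsplit : ∫ x in (a j)..(a (j+1)), (f (a j) - f x)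
        = (1/(k:ℝ)) * f (a j) - ∫ x in (a j)..(a (j+1)), f x := by
      rw [intervalIntegral.integral_sub intervalIntegrable_const hfij,
        intervalIntegral.integral_const, smul_eq_mul, hlen]
    rw [← hsplit]
    have hae : ∀ᵐ t ∂volume.restrict (Set.uIoc (a j) (a (j+1))), ‖f (a j) - f t‖ ≤ G := by
      rw [Set.uIoc_of_le hajm]
      have hne : ∀ᵐ t : ℝ ∂(volume.restrict (Set.Ioc (a j) (a (j+1)))), t ≠ a (j+1) := by
        refine ae_iff.2 (le_zero_iff.1 ?_)
        have heq : {t : ℝ | ¬ t ≠ a (j+1)} = {a (j+1)} := by ext t; simp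
        rw [heq]
        calc (volume.restrict (Set.Ioc (a j) (a (j+1)))) {a (j+1)}
            ≤ volume {a (j+1)} := Measure.le_iff'.1 Measure.restrict_le_self _
          _ = 0 := measure_singleton _
      filter_upwards [ae_restrict_mem measurableSet_Ioc, hne] with t htIoc htne
      have ht1 : t < 1 := by
        rcases lt_or_eq_of_le (htIoc.2.trans haj1) with h|h
        · exact h
        · exfalso; apply htne
          have h1 : a (j+1) ≤ t := by rw [h]; exact haj1
          exact le_antisymm htIoc.2 h1
      have hsub : Set.uIcc (a j) t ⊆ Set.Ioo (0:ℝ) 1 := by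
        rw [Set.uIcc_of_le htIoc.1.le]
        intro y hy
        exact ⟨lt_of_lt_of_le haj0 hy.1, lt_of_le_of_lt hy.2 ht1⟩
      have hf'int : IntervalIntegrable f' volume (a j) t := (hf'c.mono hsub).intervalIntegrable
      have hftc : ∫ y in (a j)..t, f' y = f t - f (a j) :=
        intervalIntegral.integral_eq_sub_of_hasDerivAt (fun y hy => hderiv y (hsub hy)) hf'int
      have h1 : ‖f (a j) - f t‖ = |∫ y in (a j)..t, f' y| := by
        rw [hftc, Real.norm_eq_abs, abs_sub_comm]
      have hgit : IntervalIntegrable g volume (a j) t := hgint _ _ haj0 htIoc.1.le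
      have hg0t : 0 ≤ ∫ y in (a j)..t, g y :=
        intervalIntegral.integral_nonneg htIoc.1.le
          (fun y hy => hgpt y ⟨hy.1, hy.2.trans htIoc.2⟩)
      have h2 : |∫ y in (a j)..t, f' y| ≤ ∫ y in (a j)..t, g y := by
        have h2' : ‖∫ y in (a j)..t, f' y‖ ≤ |∫ y in (a j)..t, g y| := by
          refine intervalIntegral.norm_integral_le_abs_of_norm_le ?_ hgit
          rw [Set.uIoc_of_le htIoc.1.le]
          filter_upwards [ae_restrict_mem measurableSet_Ioc] with y hy
          rw [Real.norm_eq_abs]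
          exact hf'bound y ⟨lt_trans haj0 hy.1, lt_of_le_of_lt hy.2 ht1⟩
        rwa [Real.norm_eq_abs, abs_of_nonneg hg0t] at h2'
      have h3 : ∫ y in (a j)..t, g y ≤ G := by
        refine intervalIntegral.integral_mono_interval le_rfl htIoc.1.le htIoc.2 ?_ hgij
        filter_upwards [ae_restrict_mem measurableSet_Ioc] with y hy
        exact hgpt y ⟨hy.1.le, hy.2⟩
      rw [h1]
      exact h2.trans h3
    have hnorm := intervalIntegral.norm_integral_le_abs_of_norm_le hae intervalIntegrable_const
    rw [intervalIntegral.integral_const, smul_eq_mul, hlen, Real.norm_eq_abs,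
      abs_of_nonneg (by positivity : (0:ℝ) ≤ 1/(k:ℝ) * G)] at hnorm
    exact hnorm
  -- sums of adjacent intervals
  have hsum_f : ∑ j ∈ Finset.range (k-1), ∫ x in (a j)..(a (j+1)), f x
      = ∫ x in (1/(k:ℝ))..1, f x := by
    rw [← ha0, ← hak]
    exact intervalIntegral.sum_integral_adjacent_intervals (fun j hj =>
      hfsub _ _ ⟨(hapos j).le, hale j (by omega)⟩ ⟨(hapos (j+1)).le, hale (j+1) (by omega)⟩)
  have hsum_g : ∑ j ∈ Finset.range (k-1), ∫ x in (a j)..(a (j+1)), g x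
      = ∫ x in (1/(k:ℝ))..1, g x := by
    rw [← ha0, ← hak]
    exact intervalIntegral.sum_integral_adjacent_intervals (fun j hj =>
      hgint _ _ (hapos j) (hamono j))
  -- rewrite the Riemann sum
  have hS : (∑ i ∈ Finset.Icc 1 (k-1), W ((i:ℝ)/(k:ℝ)) * Real.log ((k:ℝ)/(i:ℝ)))
      = ∑ j ∈ Finset.range (k-1), f (a j) := by
    rw [show Finset.Icc 1 (k-1) = Finset.Ico 1 k by rw [← Finset.Ico_add_one_right_eq_Icc]; congr 1; omega,
      Finset.sum_Ico_eq_sum_range]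
    refine Finset.sum_congr rfl fun j hj => ?_
    rw [hf, ha]; dsimp only
    push_cast
    rw [one_div_div]
    ring_nf
  set S := ∑ j ∈ Finset.range (k-1), f (a j) with hSdef
  -- E2 total
  have hE2 : |(1/(k:ℝ)) * S - ∫ x in (1/(k:ℝ))..1, f x| ≤ C2 * (k:ℝ)^(q-1) * Real.log k := by
    have heq : (1/(k:ℝ)) * S - ∫ x in (1/(k:ℝ))..1, f x
        = ∑ j ∈ Finset.range (k-1), ((1/(k:ℝ)) * f (a j) - ∫ x in (a j)..(a (j+1)), f x) := by
      rw [Finset.sum_sub_distrib, ← Finset.mul_sum, hsum_f]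
    rw [heq]
    calc |∑ j ∈ Finset.range (k-1), ((1/(k:ℝ)) * f (a j) - ∫ x in (a j)..(a (j+1)), f x)|
        ≤ ∑ j ∈ Finset.range (k-1), |(1/(k:ℝ)) * f (a j) - ∫ x in (a j)..(a (j+1)), f x| :=
          Finset.abs_sum_le_sum_abs _ _
      _ ≤ ∑ j ∈ Finset.range (k-1), (1/(k:ℝ)) * ∫ x in (a j)..(a (j+1)), g x :=
          Finset.sum_le_sum (fun j hj => hstep j (Finset.mem_range.1 hj))
      _ = (1/(k:ℝ)) * ∫ x in (1/(k:ℝ))..1, g x := by rw [← Finset.mul_sum, hsum_g]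
      _ ≤ (1/(k:ℝ)) * (C2 * (k:ℝ)^q * Real.log k) :=
          mul_le_mul_of_nonneg_left (hC2 k hk) (by positivity)
      _ = C2 * (k:ℝ)^(q-1) * Real.log k := by
          rw [Real.rpow_sub hK0, Real.rpow_one]; ring
  -- E3
  have hE3 : |∫ x in (0:ℝ)..(1/(k:ℝ)), f x| ≤ M * (C3 * (k:ℝ)^(q-1) * Real.log k) := by
    have hb3 : IntervalIntegrable (fun x : ℝ => M * (x^(-q) * Real.log (1/x)))
        volume 0 (1/(k:ℝ)) := by
      refine hbndi.mono_set ?_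
      rw [Set.uIcc_of_le hKinv.le, Set.uIcc_of_le zero_le_one]
      exact Set.Icc_subset_Icc le_rfl hKinv1
    have h0 : 0 ≤ ∫ x in (0:ℝ)..(1/(k:ℝ)), M * (x^(-q) * Real.log (1/x)) :=
      intervalIntegral.integral_nonneg hKinv.le
        (fun x hx => mul_nonneg hM.le (TRS_nonneg ⟨hx.1, hx.2.trans hKinv1⟩))
    have h : ‖∫ x in (0:ℝ)..(1/(k:ℝ)), f x‖ ≤
        |∫ x in (0:ℝ)..(1/(k:ℝ)), M * (x^(-q) * Real.log (1/x))| := by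
      refine intervalIntegral.norm_integral_le_abs_of_norm_le ?_ hb3
      rw [Set.uIoc_of_le hKinv.le]
      filter_upwards [ae_restrict_mem measurableSet_Ioc] with x hx
      have hx1 : x < 1 := lt_of_le_of_lt hx.2 hKinvlt
      have hlog0 : 0 ≤ Real.log (1/x) :=
        Real.log_nonneg (by rw [le_div_iff₀ hx.1]; simpa using hx1.le)
      rw [Real.norm_eq_abs, hf]; dsimp only
      rw [abs_mul, abs_of_nonneg hlog0, ← mul_assoc]
      exact mul_le_mul_of_nonneg_right (hA4W x ⟨hx.1, hx1⟩) hlog0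
    rw [Real.norm_eq_abs, abs_of_nonneg h0, intervalIntegral.integral_const_mul] at h
    exact h.trans (mul_le_mul_of_nonneg_left (hC3 k hk) hM.le)
  -- E1
  have hSb : |S| ≤ ((k:ℝ)-1) * (M * (k:ℝ)^q * Real.log k) := by
    have hbnd : ∀ j ∈ Finset.range (k-1), |f (a j)| ≤ M * (k:ℝ)^q * Real.log k := by
      intro j hj
      have hjlt : j < k - 1 := Finset.mem_range.1 hj
      have haj0 : 0 < a j := hapos j
      have hajlt : a j < 1 := by
        rw [ha]; dsimp only; rw [div_lt_one hK0]
        have h1 : ((j:ℝ)+1) ≤ ((k-1:ℕ):ℝ) := by exact_mod_cast hjlt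
        rw [Nat.cast_sub (by omega), Nat.cast_one] at h1
        linarith
      have hajge : 1/(k:ℝ) ≤ a j := by
        rw [ha]; dsimp only
        gcongr
        linarith [Nat.cast_nonneg (α := ℝ) j]
      have hlog0 : 0 ≤ Real.log (1/(a j)) :=
        Real.log_nonneg (by rw [le_div_iff₀ haj0]; simpa using hajlt.le)
      have hlogle : Real.log (1/(a j)) ≤ Real.log k := by
        apply Real.log_le_log (by positivity)
        rw [div_le_iff₀ haj0]
        calc (1:ℝ) = (k:ℝ) * (1/(k:ℝ)) := by field_simp
          _ ≤ (k:ℝ) * a j := mul_le_mul_of_nonneg_left hajge hK0.le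
      have hWb : |W (a j)| ≤ M * (k:ℝ)^q := by
        refine (hA4W (a j) ⟨haj0, hajlt⟩).trans ?_
        refine mul_le_mul_of_nonneg_left ?_ hM.le
        rw [Real.rpow_neg haj0.le, ← Real.inv_rpow haj0.le]
        refine Real.rpow_le_rpow (by positivity) ?_ hq0
        have h2 := one_div_le_one_div_of_le hKinv hajge
        rw [one_div_one_div] at h2
        rw [one_div] at h2
        exact h2
      rw [hf]; dsimp only
      rw [abs_mul, abs_of_nonneg hlog0]
      exact mul_le_mul hWb hlogle hlog0 (by positivity)
    calc |S| ≤ ∑ j ∈ Finset.range (k-1), |f (a j)| := Finset.abs_sum_le_sum_abs _ _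
      _ ≤ ∑ _j ∈ Finset.range (k-1), M * (k:ℝ)^q * Real.log k := Finset.sum_le_sum hbnd
      _ = ((k:ℝ)-1) * (M * (k:ℝ)^q * Real.log k) := by
          rw [Finset.sum_const, Finset.card_range, nsmul_eq_mul,
            Nat.cast_sub (by omega), Nat.cast_one]
  have hK1 : (0:ℝ) < (k:ℝ) - 1 := by linarith
  have hE1 : |1/((k:ℝ)-1) * S - 1/(k:ℝ) * S| ≤ M * (k:ℝ)^(q-1) * Real.log k := by
    have hdiff : 1/((k:ℝ)-1) - 1/(k:ℝ) = 1/(((k:ℝ)-1)*(k:ℝ)) := by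
      field_simp
      ring
    have hdz : 0 ≤ 1/((k:ℝ)-1) - 1/(k:ℝ) := by rw [hdiff]; positivity
    calc |1/((k:ℝ)-1) * S - 1/(k:ℝ) * S|
        = |S| * (1/((k:ℝ)-1) - 1/(k:ℝ)) := by
          rw [show 1/((k:ℝ)-1) * S - 1/(k:ℝ) * S = S * (1/((k:ℝ)-1) - 1/(k:ℝ)) by ring,
            abs_mul, abs_of_nonneg hdz]
      _ ≤ (((k:ℝ)-1) * (M * (k:ℝ)^q * Real.log k)) * (1/(((k:ℝ)-1)*(k:ℝ))) := by
          rw [hdiff]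
          exact mul_le_mul_of_nonneg_right hSb (by positivity)
      _ = M * (k:ℝ)^(q-1) * Real.log k := by
          rw [Real.rpow_sub hK0, Real.rpow_one]
          field_simp
  -- assemble
  have hmu : muW W = (∫ x in (0:ℝ)..(1/(k:ℝ)), f x) + ∫ x in (1/(k:ℝ))..1, f x := by
    have h1 : muW W = ∫ x in (0:ℝ)..1, f x := rfl
    rw [h1, ← intervalIntegral.integral_add_adjacent_intervals
      (hfsub 0 (1/(k:ℝ)) ⟨le_rfl, zero_le_one⟩ ⟨hKinv.le, hKinv1⟩)
      (hfsub (1/(k:ℝ)) 1 ⟨hKinv.le, hKinv1⟩ ⟨zero_le_one, le_rfl⟩)]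
  rw [hS, hmu]
  have hre : 1/((k:ℝ)-1) * S - ((∫ x in (0:ℝ)..(1/(k:ℝ)), f x) + ∫ x in (1/(k:ℝ))..1, f x)
      = (1/((k:ℝ)-1) * S - 1/(k:ℝ) * S) + (((1/(k:ℝ)) * S - ∫ x in (1/(k:ℝ))..1, f x)
        + (- ∫ x in (0:ℝ)..(1/(k:ℝ)), f x)) := by ring
  rw [hre]
  have habs : |(1/((k:ℝ)-1) * S - 1/(k:ℝ) * S) + (((1/(k:ℝ)) * S - ∫ x in (1/(k:ℝ))..1, f x)
        + (- ∫ x in (0:ℝ)..(1/(k:ℝ)), f x))| ≤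
      |1/((k:ℝ)-1) * S - 1/(k:ℝ) * S| + (|(1/(k:ℝ)) * S - ∫ x in (1/(k:ℝ))..1, f x|
        + |∫ x in (0:ℝ)..(1/(k:ℝ)), f x|) := by
    refine (abs_add_le _ _).trans ?_
    refine add_le_add_right ?_ _
    refine (abs_add_le _ _).trans ?_
    rw [abs_neg]
  refine (habs.trans ?_)
  have := add_le_add hE1 (add_le_add hE2 hE3)
  refine this.trans (le_of_eq ?_)
  ring
end

section
/- For the score function W(x) = −(log(x) + 1) on (0,1), σ²(W) = ∫₀¹∫₀¹ W(x) W(y) (min(x,y) − xy)/(xy) dx dy = 2. -/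
open Real MeasureTheory Set Filter intervalIntegral

private lemma tendsto_mul_log_pow (n : ℕ) :
    Tendsto (fun x : ℝ => x * Real.log x ^ n) (nhdsWithin 0 (Set.Ioi 0)) (nhds 0) := by
  have h1 : Tendsto (fun x : ℝ => -Real.log x) (nhdsWithin (0:ℝ) (Set.Ioi 0)) atTop :=
    tendsto_neg_atTop_iff.mpr Real.tendsto_log_nhdsGT_zero
  have h2 := (tendsto_pow_mul_exp_neg_atTop_nhds_zero n).comp h1
  have h3 : Tendsto (fun x : ℝ => ((-1:ℝ) ^ n) *
      ((-Real.log x) ^ n * Real.exp (-(-Real.log x))))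
      (nhdsWithin (0:ℝ) (Set.Ioi 0)) (nhds 0) := by
    simpa using h2.const_mul ((-1:ℝ)^n)
  refine h3.congr' ?_
  filter_upwards [self_mem_nhdsWithin] with x hx
  have hx0 : (0:ℝ) < x := hx
  have h4 : ((-1:ℝ)^n) * ((-1:ℝ)^n) = 1 := by
    rw [← mul_pow]; norm_num
  rw [neg_neg, Real.exp_log hx0, neg_pow (Real.log x), ← mul_assoc, ← mul_assoc, h4,
    one_mul, mul_comm]

private lemma contOn_mul_log_pow (n : ℕ) :
    ContinuousOn (fun x : ℝ => x * Real.log x ^ n) (Set.Icc 0 1) := by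
  intro x hx
  rcases eq_or_lt_of_le hx.1 with h | h
  · subst h
    rw [← continuousWithinAt_diff_self]
    have hsub : Set.Icc (0:ℝ) 1 \ {0} ⊆ Set.Ioi 0 :=
      fun y hy => lt_of_le_of_ne hy.1.1 (Ne.symm hy.2)
    have := (tendsto_mul_log_pow n).mono_left (nhdsWithin_mono _ hsub)
    simpa [ContinuousWithinAt] using this
  · exact (continuousAt_id.mul ((Real.continuousAt_log h.ne').pow n)).continuousWithinAt

private lemma hasDerivAt_mul_log_pow (n : ℕ) {y : ℝ} (hy : y ≠ 0) :
    HasDerivAt (fun t : ℝ => t * Real.log t ^ n)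
      (Real.log y ^ n + n * Real.log y ^ (n - 1)) y := by
  have h1 : HasDerivAt (fun t : ℝ => Real.log t ^ n)
      ((n : ℝ) * Real.log y ^ (n - 1) * y⁻¹) y :=
    (Real.hasDerivAt_log hy).pow n
  have h2 := (hasDerivAt_id y).mul h1
  refine h2.congr_deriv ?_
  field_simp
  simp only [id]
  ring

private lemma II1 : IntervalIntegrable (fun y : ℝ => Real.log y) volume 0 1 := by
  have h : IntervalIntegrable (fun y : ℝ => -Real.log y) volume 0 1 := by
    have hcont : ContinuousOn (fun y : ℝ => y - y * Real.log y ^ 1) (Set.uIcc 0 1) := by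
      rw [Set.uIcc_of_le zero_le_one]
      exact continuousOn_id.sub (contOn_mul_log_pow 1)
    apply intervalIntegrable_deriv_of_nonneg hcont
    · intro x hx
      simp only [min_eq_left zero_le_one, max_eq_right zero_le_one] at hx ⊢
      have := (hasDerivAt_id x).sub (hasDerivAt_mul_log_pow 1 hx.1.ne')
      refine this.congr_deriv ?_
      simp
    · intro x hx
      simp only [min_eq_left zero_le_one, max_eq_right zero_le_one] at hx
      have := Real.log_neg hx.1 hx.2
      linarith
  have h2 := h.neg
  rwa [show (-fun y : ℝ => -Real.log y) = fun y : ℝ => Real.log y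
    from by funext y; simp] at h2

private lemma II2 : IntervalIntegrable (fun y : ℝ => Real.log y ^ 2) volume 0 1 := by
  have hcont : ContinuousOn
      (fun y : ℝ => y * Real.log y ^ 2 - 2 * (y * Real.log y ^ 1) + 2 * y)
      (Set.uIcc 0 1) := by
    rw [Set.uIcc_of_le zero_le_one]
    exact ((contOn_mul_log_pow 2).sub
      (continuousOn_const.mul (contOn_mul_log_pow 1))).add
      (continuousOn_const.mul continuousOn_id)
  apply intervalIntegrable_deriv_of_nonneg hcont
  · intro x hx
    simp only [min_eq_left zero_le_one, max_eq_right zero_le_one] at hx ⊢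
    have h1 := hasDerivAt_mul_log_pow 2 hx.1.ne'
    have h2 := hasDerivAt_mul_log_pow 1 hx.1.ne'
    have := (h1.sub (h2.const_mul 2)).add ((hasDerivAt_id x).const_mul 2)
    refine this.congr_deriv ?_
    push_cast
    simp only [pow_one, pow_zero]
    ring
  · intro x hx
    positivity

private lemma II3 : IntervalIntegrable (fun y : ℝ => Real.log y ^ 3) volume 0 1 := by
  have h : IntervalIntegrable (fun y : ℝ => -Real.log y ^ 3) volume 0 1 := by
    have hcont : ContinuousOn
        (fun y : ℝ => -(y * Real.log y ^ 3 - 3 * (y * Real.log y ^ 2)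
          + 6 * (y * Real.log y ^ 1) - 6 * y)) (Set.uIcc 0 1) := by
      rw [Set.uIcc_of_le zero_le_one]
      exact ((((contOn_mul_log_pow 3).sub
        (continuousOn_const.mul (contOn_mul_log_pow 2))).add
        (continuousOn_const.mul (contOn_mul_log_pow 1))).sub
        (continuousOn_const.mul continuousOn_id)).neg
    apply intervalIntegrable_deriv_of_nonneg hcont
    · intro x hx
      simp only [min_eq_left zero_le_one, max_eq_right zero_le_one] at hx ⊢
      have h3 := hasDerivAt_mul_log_pow 3 hx.1.ne'
      have h2 := hasDerivAt_mul_log_pow 2 hx.1.ne'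
      have h1 := hasDerivAt_mul_log_pow 1 hx.1.ne'
      have := (((h3.sub (h2.const_mul 3)).add (h1.const_mul 6)).sub
        ((hasDerivAt_id x).const_mul 6)).neg
      refine this.congr_deriv ?_
      push_cast
      simp only [pow_one, pow_zero]
      ring
    · intro x hx
      simp only [min_eq_left zero_le_one, max_eq_right zero_le_one] at hx
      have := Real.log_neg hx.1 hx.2
      nlinarith [sq_nonneg (Real.log x)]
  have h2 := h.neg
  rwa [show (-fun y : ℝ => -Real.log y ^ 3) = fun y : ℝ => Real.log y ^ 3
    from by funext y; simp] at h2

private lemma integral_log_add_one {x : ℝ} (hx : 0 < x) (hx1 : x ≤ 1) :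
    ∫ y in (0:ℝ)..x, (Real.log y + 1) = x * Real.log x := by
  have hcont : ContinuousOn (fun t : ℝ => t * Real.log t ^ 1) (Set.Icc 0 x) :=
    (contOn_mul_log_pow 1).mono (Set.Icc_subset_Icc le_rfl hx1)
  have hderiv : ∀ y ∈ Set.Ioo (0:ℝ) x,
      HasDerivWithinAt (fun t : ℝ => t * Real.log t ^ 1) (Real.log y + 1) (Set.Ioi y) y := by
    intro y hy
    have := (hasDerivAt_mul_log_pow 1 hy.1.ne').hasDerivWithinAt (s := Set.Ioi y)
    simpa using this
  have hint : IntervalIntegrable (fun y : ℝ => Real.log y + 1) volume 0 x := by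
    refine (II1.mono_set ?_).add intervalIntegrable_const
    rw [Set.uIcc_of_le hx.le, Set.uIcc_of_le zero_le_one]
    exact Set.Icc_subset_Icc le_rfl hx1
  have := integral_eq_sub_of_hasDeriv_right_of_le hx.le hcont hderiv hint
  simpa using this

private lemma integral_piece2 {x : ℝ} (hx : 0 < x) (hx1 : x ≤ 1) :
    ∫ y in x..1, (Real.log y + 1) * (1 - y) / y
      = -(Real.log x ^ 2) / 2 - Real.log x + x * Real.log x := by
  have key : ∀ y ∈ Set.uIcc x 1, (0:ℝ) < y := by
    rw [Set.uIcc_of_le hx1]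
    exact fun y hy => lt_of_lt_of_le hx hy.1
  have hderiv : ∀ y ∈ Set.uIcc x 1,
      HasDerivAt (fun t : ℝ => Real.log t ^ 2 / 2 + Real.log t - t * Real.log t ^ 1)
        ((Real.log y + 1) * (1 - y) / y) y := by
    intro y hy
    have hy0 := key y hy
    have hL := Real.hasDerivAt_log hy0.ne'
    have h2 : HasDerivAt (fun t : ℝ => Real.log t ^ 2)
        ((2:ℕ) * Real.log y ^ 1 * y⁻¹) y := hL.pow 2
    have := ((h2.div_const 2).add hL).sub (hasDerivAt_mul_log_pow 1 hy0.ne')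
    refine this.congr_deriv ?_
    push_cast
    simp only [pow_one, pow_zero]
    field_simp
  have hint : IntervalIntegrable (fun y : ℝ => (Real.log y + 1) * (1 - y) / y)
      volume x 1 := by
    apply ContinuousOn.intervalIntegrable
    apply ContinuousOn.div
    · exact ((Real.continuousOn_log.mono (fun y hy => (key y hy).ne')).add
        continuousOn_const).mul (continuousOn_const.sub continuousOn_id)
    · exact continuousOn_id
    · exact fun y hy => (key y hy).ne'
  have := integral_eq_sub_of_hasDerivAt hderiv hint
  rw [this]
  simp [Real.log_one]
  ring

private lemma inner_eq {x : ℝ} (hx : x ∈ Set.Ioo (0:ℝ) 1) :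
    (∫ y in (0:ℝ)..1,
        (-(Real.log x + 1)) * (-(Real.log y + 1)) * (min x y - x * y) / (x * y))
      = -((Real.log x ^ 3 + Real.log x ^ 2) / 2) := by
  obtain ⟨hx0, hx1⟩ := hx
  set f : ℝ → ℝ := fun y =>
    (-(Real.log x + 1)) * (-(Real.log y + 1)) * (min x y - x * y) / (x * y) with hf
  have eq1 : Set.EqOn f
      (fun y => (Real.log x + 1) * (1 - x) / x * (Real.log y + 1)) (Set.Ioc 0 x) := by
    intro y hy
    simp only [hf]
    rw [min_eq_right hy.2]
    field_simp [hx0.ne', hy.1.ne']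
  have eq2 : Set.EqOn f
      (fun y => (Real.log x + 1) * ((Real.log y + 1) * (1 - y) / y)) (Set.Icc x 1) := by
    intro y hy
    have hy0 : 0 < y := lt_of_lt_of_le hx0 hy.1
    simp only [hf]
    rw [min_eq_left hy.1]
    field_simp [hx0.ne', hy0.ne']
  have hg1 : IntervalIntegrable
      (fun y : ℝ => (Real.log x + 1) * (1 - x) / x * (Real.log y + 1)) volume 0 x := by
    refine ((II1.mono_set ?_).add intervalIntegrable_const).const_mul _
    rw [Set.uIcc_of_le hx0.le, Set.uIcc_of_le zero_le_one]
    exact Set.Icc_subset_Icc le_rfl hx1.le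
  have hcont2 : ContinuousOn
      (fun y : ℝ => (Real.log x + 1) * ((Real.log y + 1) * (1 - y) / y))
      (Set.Icc x 1) := by
    have key : ∀ y ∈ Set.Icc x 1, y ≠ 0 := fun y hy => (lt_of_lt_of_le hx0 hy.1).ne'
    refine continuousOn_const.mul (ContinuousOn.div ?_ continuousOn_id key)
    exact ((Real.continuousOn_log.mono key).add continuousOn_const).mul
      (continuousOn_const.sub continuousOn_id)
  have h1 : IntervalIntegrable f volume 0 x := by
    rw [intervalIntegrable_iff_integrableOn_Ioc_of_le hx0.le] at hg1 ⊢
    exact hg1.congr_fun eq1.symm measurableSet_Ioc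
  have h2 : IntervalIntegrable f volume x 1 := by
    rw [intervalIntegrable_iff_integrableOn_Ioc_of_le hx1.le]
    exact ((hcont2.integrableOn_Icc).mono_set Set.Ioc_subset_Icc_self).congr_fun
      ((eq2.mono Set.Ioc_subset_Icc_self).symm) measurableSet_Ioc
  rw [← intervalIntegral.integral_add_adjacent_intervals h1 h2]
  have p1 : ∫ y in (0:ℝ)..x, f y
      = (Real.log x + 1) * (1 - x) / x * (x * Real.log x) := by
    rw [intervalIntegral.integral_of_le hx0.le,
      setIntegral_congr_fun measurableSet_Ioc eq1,
      ← intervalIntegral.integral_of_le hx0.le,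
      intervalIntegral.integral_const_mul, integral_log_add_one hx0 hx1.le]
  have p2 : ∫ y in x..1, f y
      = (Real.log x + 1) * (-(Real.log x ^ 2) / 2 - Real.log x + x * Real.log x) := by
    have : Set.EqOn f
        (fun y => (Real.log x + 1) * ((Real.log y + 1) * (1 - y) / y))
        (Set.uIcc x 1) := by
      rw [Set.uIcc_of_le hx1.le]; exact eq2
    rw [intervalIntegral.integral_congr this,
      intervalIntegral.integral_const_mul, integral_piece2 hx0 hx1.le]
  rw [p1, p2]
  field_simp [hx0.ne']
  ring

/-- For the score function `W(x) = −(log(x)+1)`,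
`σ²(W) = ∫₀¹∫₀¹ W(x)W(y)(min(x,y)−xy)/(xy) dx dy = 2`. -/
theorem sigmaSq_zipf_score :
    (∫ x in (0:ℝ)..1, ∫ y in (0:ℝ)..1,
      (-(Real.log x + 1)) * (-(Real.log y + 1)) * (min x y - x * y) / (x * y)) = 2 := by
  have step1 : (∫ x in (0:ℝ)..1, ∫ y in (0:ℝ)..1,
      (-(Real.log x + 1)) * (-(Real.log y + 1)) * (min x y - x * y) / (x * y))
      = ∫ x in (0:ℝ)..1, -((Real.log x ^ 3 + Real.log x ^ 2) / 2) := by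
    rw [intervalIntegral.integral_of_le zero_le_one,
      MeasureTheory.integral_Ioc_eq_integral_Ioo,
      setIntegral_congr_fun measurableSet_Ioo (fun x hx => inner_eq hx),
      ← MeasureTheory.integral_Ioc_eq_integral_Ioo,
      ← intervalIntegral.integral_of_le zero_le_one]
  rw [step1]
  have hcont : ContinuousOn
      (fun x : ℝ => -((x * Real.log x ^ 3 - 2 * (x * Real.log x ^ 2)
        + 4 * (x * Real.log x ^ 1) - 4 * x) / 2)) (Set.Icc 0 1) := by
    exact (((((contOn_mul_log_pow 3).sub
      (continuousOn_const.mul (contOn_mul_log_pow 2))).add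
      (continuousOn_const.mul (contOn_mul_log_pow 1))).sub
      (continuousOn_const.mul continuousOn_id)).div_const 2).neg
  have hderiv : ∀ x ∈ Set.Ioo (0:ℝ) 1,
      HasDerivWithinAt (fun x : ℝ => -((x * Real.log x ^ 3 - 2 * (x * Real.log x ^ 2)
        + 4 * (x * Real.log x ^ 1) - 4 * x) / 2))
        (-((Real.log x ^ 3 + Real.log x ^ 2) / 2)) (Set.Ioi x) x := by
    intro x hx
    have h3 := hasDerivAt_mul_log_pow 3 hx.1.ne'
    have h2 := hasDerivAt_mul_log_pow 2 hx.1.ne'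
    have h1 := hasDerivAt_mul_log_pow 1 hx.1.ne'
    have := ((((h3.sub (h2.const_mul 2)).add (h1.const_mul 4)).sub
      ((hasDerivAt_id x).const_mul 4)).div_const 2).neg
    refine HasDerivAt.hasDerivWithinAt ?_
    refine this.congr_deriv ?_
    push_cast
    simp only [pow_one, pow_zero]
    ring
  have hint : IntervalIntegrable
      (fun x : ℝ => -((Real.log x ^ 3 + Real.log x ^ 2) / 2)) volume 0 1 :=
    ((II3.add II2).div_const 2).neg
  rw [integral_eq_sub_of_hasDeriv_right_of_le zero_le_one hcont hderiv hint]
  norm_num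
end

section
/- Let F be a cumulative distribution function with F(t) < 1 for all t, H = −log(1−F) and H⁻(t) = inf{x : H(x) ≥ t}, and let θ > 0. Then the following are equivalent: (i) for every λ > 0, log(1−F(λt))/log(1−F(t)) → λ^{1/θ} as t → ∞; (ii) H⁻ is regularly varying at infinity with index θ, i.e. H⁻(t) = t^θ ℓ(t) for some slowly varying function ℓ (ℓ(λt)/ℓ(t) → 1 as t → ∞ for every λ > 0). -/
open MeasureTheory ProbabilityTheory Filter Set Topology

section aux
variable {F : ℝ → ℝ}

lemma hz_mono (hmono : Monotone F) (hlt : ∀ t, F t < 1) : Monotone (hazard F) := by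
  intro x y hxy
  have h1 : 0 < 1 - F y := by linarith [hlt y]
  have h2 : 1 - F y ≤ 1 - F x := by linarith [hmono hxy]
  simpa [hazard] using neg_le_neg (Real.log_le_log h1 h2)

lemma hz_top (hlt : ∀ t, F t < 1) (htop : Tendsto F atTop (𝓝 1)) :
    Tendsto (hazard F) atTop atTop := by
  have h1 : Tendsto (fun x => 1 - F x) atTop (𝓝[>] 0) := by
    apply tendsto_nhdsWithin_of_tendsto_nhds_of_eventually_within
    · have : Tendsto (fun x => 1 - F x) atTop (𝓝 (1 - 1)) := tendsto_const_nhds.sub htop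
      simpa using this
    · exact Eventually.of_forall fun x => by simp [mem_Ioi]; linarith [hlt x]
  have h2 := Real.tendsto_log_nhdsGT_zero.comp h1
  have h3 := tendsto_neg_atBot_atTop.comp h2
  exact h3

lemma setNe (hlt : ∀ t, F t < 1) (htop : Tendsto F atTop (𝓝 1)) (t : ℝ) :
    {x : ℝ | t ≤ hazard F x}.Nonempty :=
  ((hz_top hlt htop).eventually_ge_atTop t).exists

lemma hinv_le (hmono : Monotone F) (hlt : ∀ t, F t < 1) {t x x₀ : ℝ}
    (h0 : hazard F x₀ < t) (hx : t ≤ hazard F x) : hazardInv F t ≤ x :=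
  csInf_le ⟨x₀, fun y hy => le_of_not_gt fun hlt' =>
    (hy.trans (hz_mono hmono hlt hlt'.le)).not_gt h0⟩ hx

lemma hz_lt_of_lt_inv (hmono : Monotone F) (hlt : ∀ t, F t < 1) {t x x₀ : ℝ}
    (h0 : hazard F x₀ < t) (hx : x < hazardInv F t) : hazard F x < t := by
  by_contra h
  push_neg at h
  exact absurd (hinv_le hmono hlt h0 h) hx.not_ge

lemma le_hz_of_inv_lt (hmono : Monotone F) (hlt : ∀ t, F t < 1)
    (htop : Tendsto F atTop (𝓝 1)) {t x : ℝ} (hx : hazardInv F t < x) :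
    t ≤ hazard F x := by
  obtain ⟨y, hy, hyx⟩ := exists_lt_of_csInf_lt (setNe hlt htop t) hx
  exact hy.trans (hz_mono hmono hlt hyx.le)

lemma le_inv_of_hz_lt (hmono : Monotone F) (hlt : ∀ t, F t < 1)
    (htop : Tendsto F atTop (𝓝 1)) {t x : ℝ} (h : hazard F x < t) :
    x ≤ hazardInv F t := by
  refine le_csInf (setNe hlt htop t) fun y hy => le_of_not_gt fun hyx => ?_
  exact (hy.trans (hz_mono hmono hlt hyx.le)).not_gt h

lemma inv_mono (hmono : Monotone F) (hlt : ∀ t, F t < 1)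
    (htop : Tendsto F atTop (𝓝 1)) {t t' x₀ : ℝ}
    (h0 : hazard F x₀ < t) (h : t ≤ t') : hazardInv F t ≤ hazardInv F t' := by
  refine csInf_le_csInf ⟨x₀, fun y hy => le_of_not_gt fun hlt' =>
    (hy.trans (hz_mono hmono hlt hlt'.le)).not_gt h0⟩ (setNe hlt htop t') ?_
  exact fun x hx => h.trans hx

lemma inv_top (hmono : Monotone F) (hlt : ∀ t, F t < 1)
    (htop : Tendsto F atTop (𝓝 1)) : Tendsto (hazardInv F) atTop atTop := by
  rw [tendsto_atTop]
  intro M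
  filter_upwards [eventually_gt_atTop (hazard F M)] with t ht
  refine le_csInf (setNe hlt htop t) fun x hx => ?_
  exact le_of_not_gt fun hxM => (hx.trans (hz_mono hmono hlt hxM.le)).not_gt ht

end aux

section dirs
variable {F : ℝ → ℝ}

lemma rpow_theta_inv {l θ : ℝ} (hl : 0 < l) (hθ : θ ≠ 0) : (l ^ θ) ^ (1/θ) = l := by
  rw [one_div, Real.rpow_rpow_inv hl.le hθ]

lemma dirA (hmono : Monotone F) (hlt : ∀ t, F t < 1) (htop : Tendsto F atTop (𝓝 1))
    {θ : ℝ} (hθ : 0 < θ)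
    (hH : ∀ l : ℝ, 0 < l →
      Tendsto (fun t => hazard F (l*t) / hazard F t) atTop (𝓝 (l ^ (1/θ))))
    (l : ℝ) (hl : 0 < l) :
    Tendsto (fun s => hazardInv F (l*s) / hazardInv F s) atTop (𝓝 (l ^ θ)) := by
  have hlθ : 0 < l ^ θ := Real.rpow_pos_of_pos hl θ
  have hgtop := inv_top hmono hlt htop
  have upper : ∀ C : ℝ, l ^ θ < C → ∀ᶠ s in atTop,
      hazardInv F (l*s) ≤ C * hazardInv F s := by
    intro C hC
    set δ : ℝ := (C / l ^ θ - 1)/2 with hδdef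
    have hx1 : 1 < C / l ^ θ := (one_lt_div hlθ).2 hC
    have hδ : 0 < δ := by simp only [hδdef]; linarith
    have h1δ : (0:ℝ) < 1 + δ := by linarith
    have hltC : (1+δ) * l ^ θ < C := by
      have : (1 + δ) < C / l ^ θ := by simp only [hδdef]; linarith
      calc (1+δ) * l^θ < (C / l^θ) * l^θ := by
            exact mul_lt_mul_of_pos_right this hlθ
        _ = C := div_mul_cancel₀ C (ne_of_gt hlθ)
    set r : ℝ := C / (1+δ) with hrdef
    have hr0 : 0 < r := div_pos (hlθ.trans hC) h1δ
    have hrθ : l ^ θ < r := (lt_div_iff₀ h1δ).2 (by linarith [hltC])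
    have hrl : l < r ^ (1/θ) := by
      have := Real.rpow_lt_rpow hlθ.le hrθ (by positivity : (0:ℝ) < 1/θ)
      rwa [rpow_theta_inv hl hθ.ne'] at this
    have hmul : Tendsto (fun s => (1+δ) * hazardInv F s) atTop atTop :=
      hgtop.const_mul_atTop h1δ
    have hcomp : Tendsto (fun s => hazard F (C * hazardInv F s) /
        hazard F ((1+δ) * hazardInv F s)) atTop (𝓝 (r ^ (1/θ))) := by
      have h1 := (hH r hr0).comp hmul
      refine h1.congr fun s => ?_
      simp only [Function.comp_apply]
      rw [← mul_assoc, hrdef, div_mul_cancel₀ C (ne_of_gt h1δ)]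
    have hHd : ∀ᶠ s in atTop, 0 < hazard F ((1+δ) * hazardInv F s) := by
      have := (hz_top hlt htop).comp hmul
      exact this.eventually_gt_atTop 0
    filter_upwards [hgtop.eventually_gt_atTop 0,
      hcomp.eventually (eventually_gt_nhds hrl), hHd,
      eventually_gt_atTop (hazard F 0 / l)] with s hg0 hratio hHdpos hs0
    have h0 : hazard F 0 < l * s := (div_lt_iff₀' hl).1 hs0
    have key : l * hazard F ((1+δ) * hazardInv F s) <
        hazard F (C * hazardInv F s) := (lt_div_iff₀ hHdpos).1 hratio
    have hsle : s ≤ hazard F ((1+δ) * hazardInv F s) :=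
      le_hz_of_inv_lt hmono hlt htop (by nlinarith)
    exact hinv_le hmono hlt h0
      (le_of_lt (lt_of_le_of_lt (by nlinarith) key))
  have lower : ∀ c : ℝ, 0 < c → c < l ^ θ → ∀ᶠ s in atTop,
      c * hazardInv F s ≤ hazardInv F (l*s) := by
    intro c hc0 hc
    set δ : ℝ := min (1/2) ((1 - c / l ^ θ)/2) with hδdef
    have hx1 : c / l ^ θ < 1 := (div_lt_one hlθ).2 hc
    have hx0 : 0 < c / l ^ θ := div_pos hc0 hlθ
    have hδ : 0 < δ := by
      simp only [hδdef, lt_min_iff]; constructor <;> linarith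
    have hδ1 : δ < 1 := by
      have : δ ≤ 1/2 := min_le_left _ _
      linarith
    have h1δ : (0:ℝ) < 1 - δ := by linarith
    have hltc : c < (1-δ) * l ^ θ := by
      have h2 : δ ≤ (1 - c / l^θ)/2 := min_le_right _ _
      have h3 : c / l^θ < 1 - δ := by linarith
      calc c = (c / l^θ) * l^θ := (div_mul_cancel₀ c (ne_of_gt hlθ)).symm
        _ < (1-δ) * l^θ := mul_lt_mul_of_pos_right h3 hlθ
    set r : ℝ := c / (1-δ) with hrdef
    have hr0 : 0 < r := div_pos hc0 h1δ
    have hrθ : r < l ^ θ := (div_lt_iff₀ h1δ).2 (by linarith [hltc])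
    have hrl : r ^ (1/θ) < l := by
      have := Real.rpow_lt_rpow hr0.le hrθ (by positivity : (0:ℝ) < 1/θ)
      rwa [rpow_theta_inv hl hθ.ne'] at this
    have hmul : Tendsto (fun s => (1-δ) * hazardInv F s) atTop atTop :=
      hgtop.const_mul_atTop h1δ
    have hcomp : Tendsto (fun s => hazard F (c * hazardInv F s) /
        hazard F ((1-δ) * hazardInv F s)) atTop (𝓝 (r ^ (1/θ))) := by
      have h1 := (hH r hr0).comp hmul
      refine h1.congr fun s => ?_
      simp only [Function.comp_apply]
      rw [← mul_assoc, hrdef, div_mul_cancel₀ c (ne_of_gt h1δ)]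
    have hHd : ∀ᶠ s in atTop, 0 < hazard F ((1-δ) * hazardInv F s) := by
      have := (hz_top hlt htop).comp hmul
      exact this.eventually_gt_atTop 0
    filter_upwards [hgtop.eventually_gt_atTop 0,
      hcomp.eventually (eventually_lt_nhds hrl), hHd,
      eventually_gt_atTop (hazard F 0)] with s hg0 hratio hHdpos hs0
    have hHlt : hazard F ((1-δ) * hazardInv F s) < s :=
      hz_lt_of_lt_inv hmono hlt hs0 (by nlinarith)
    have key : hazard F (c * hazardInv F s) <
        l * hazard F ((1-δ) * hazardInv F s) := (div_lt_iff₀ hHdpos).1 hratio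
    exact le_inv_of_hz_lt hmono hlt htop (by nlinarith)
  have hgl : Tendsto (fun s => hazardInv F (l*s)) atTop atTop :=
    hgtop.comp (tendsto_id.const_mul_atTop hl)
  rw [tendsto_order]
  constructor
  · intro a ha
    rcases le_or_gt a 0 with h | h
    · filter_upwards [hgtop.eventually_gt_atTop 0, hgl.eventually_gt_atTop 0]
        with s h1 h2
      exact lt_of_le_of_lt h (div_pos h2 h1)
    · have hc1 : a < (a + l^θ)/2 := by linarith
      filter_upwards [lower ((a + l^θ)/2) (by linarith) (by linarith),
        hgtop.eventually_gt_atTop 0] with s hls hg0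
      exact hc1.trans_le ((le_div_iff₀ hg0).2 hls)
  · intro a ha
    have hC2 : (l^θ + a)/2 < a := by linarith
    filter_upwards [upper ((l^θ + a)/2) (by linarith),
      hgtop.eventually_gt_atTop 0] with s hls hg0
    exact lt_of_le_of_lt ((div_le_iff₀ hg0).2 hls) hC2

end dirs
section dirB
variable {F : ℝ → ℝ}

lemma rpow_inv_theta {l θ : ℝ} (hl : 0 < l) (hθ : θ ≠ 0) : (l ^ (1/θ)) ^ θ = l := by
  rw [one_div, Real.rpow_inv_rpow hl.le hθ]

lemma dirB (hmono : Monotone F) (hlt : ∀ t, F t < 1) (htop : Tendsto F atTop (𝓝 1))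
    {θ : ℝ} (hθ : 0 < θ)
    (hg : ∀ l : ℝ, 0 < l →
      Tendsto (fun t => hazardInv F (l*t) / hazardInv F t) atTop (𝓝 (l ^ θ)))
    (l : ℝ) (hl : 0 < l) :
    Tendsto (fun x => hazard F (l*x) / hazard F x) atTop (𝓝 (l ^ (1/θ))) := by
  have hlθ : 0 < l ^ (1/θ) := Real.rpow_pos_of_pos hl _
  have hHtop := hz_top hlt htop
  have hgtop := inv_top hmono hlt htop
  have hHltop : Tendsto (fun x => hazard F (l*x)) atTop atTop :=
    hHtop.comp (tendsto_id.const_mul_atTop hl)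
  have upper : ∀ C : ℝ, l ^ (1/θ) < C → ∀ᶠ x in atTop,
      hazard F (l*x) ≤ C * hazard F x := by
    intro C hC
    set δ : ℝ := (C / l ^ (1/θ) - 1)/2 with hδdef
    have hx1 : 1 < C / l ^ (1/θ) := (one_lt_div hlθ).2 hC
    have hδ : 0 < δ := by simp only [hδdef]; linarith
    have h1δ : (0:ℝ) < 1 + δ := by linarith
    have hltC : (1+δ) * l ^ (1/θ) < C := by
      have : (1 + δ) < C / l ^ (1/θ) := by simp only [hδdef]; linarith
      calc (1+δ) * l^(1/θ) < (C / l^(1/θ)) * l^(1/θ) :=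
            mul_lt_mul_of_pos_right this hlθ
        _ = C := div_mul_cancel₀ C (ne_of_gt hlθ)
    set r : ℝ := C / (1+δ) with hrdef
    have hr0 : 0 < r := div_pos (hlθ.trans hC) h1δ
    have hrθ : l ^ (1/θ) < r := (lt_div_iff₀ h1δ).2 (by linarith [hltC])
    have hrl : l < r ^ θ := by
      have := Real.rpow_lt_rpow hlθ.le hrθ hθ
      rwa [rpow_inv_theta hl hθ.ne'] at this
    have hmul : Tendsto (fun x => (1+δ) * hazard F x) atTop atTop :=
      hHtop.const_mul_atTop h1δ
    have hcomp : Tendsto (fun x => hazardInv F (C * hazard F x) /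
        hazardInv F ((1+δ) * hazard F x)) atTop (𝓝 (r ^ θ)) := by
      have h1 := (hg r hr0).comp hmul
      refine h1.congr fun x => ?_
      simp only [Function.comp_apply]
      rw [← mul_assoc, hrdef, div_mul_cancel₀ C (ne_of_gt h1δ)]
    have hgd : ∀ᶠ x in atTop, 0 < hazardInv F ((1+δ) * hazard F x) :=
      ((inv_top hmono hlt htop).comp hmul).eventually_gt_atTop 0
    have hCpos : 0 < C := hlθ.trans hC
    filter_upwards [hHtop.eventually_gt_atTop 0,
      hcomp.eventually (eventually_gt_nhds hrl), hgd,
      hHltop.eventually_gt_atTop (hazard F 0), hHtop.eventually_gt_atTop (hazard F 0 / C)]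
      with x hH0 hratio hgdpos hHl0 hHC0
    have key : l * hazardInv F ((1+δ) * hazard F x) <
        hazardInv F (C * hazard F x) := (lt_div_iff₀ hgdpos).1 hratio
    have hxle : x ≤ hazardInv F ((1+δ) * hazard F x) :=
      le_inv_of_hz_lt hmono hlt htop (by nlinarith)
    have hkey2 : l * x < hazardInv F (C * hazard F x) := by nlinarith
    by_contra hcon
    push_neg at hcon
    have h0C : hazard F 0 < C * hazard F x := (div_lt_iff₀' hCpos).1 hHC0
    have h1 : hazardInv F (C * hazard F x) ≤ hazardInv F (hazard F (l*x)) :=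
      inv_mono hmono hlt htop h0C hcon.le
    have h2 : hazardInv F (hazard F (l*x)) ≤ l * x :=
      hinv_le hmono hlt hHl0 le_rfl
    linarith
  have lower : ∀ c : ℝ, 0 < c → c < l ^ (1/θ) → ∀ᶠ x in atTop,
      c * hazard F x ≤ hazard F (l*x) := by
    intro c hc0 hc
    set δ : ℝ := min (1/2) ((l ^ (1/θ) / c - 1)/2) with hδdef
    have hx1 : 1 < l ^ (1/θ) / c := (one_lt_div hc0).2 hc
    have hδ : 0 < δ := by
      simp only [hδdef, lt_min_iff]; constructor <;> linarith
    have h1δ : (0:ℝ) < 1 + δ := by linarith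
    have hltc : (1+δ) * c < l ^ (1/θ) := by
      have h2 : δ ≤ (l ^ (1/θ) / c - 1)/2 := min_le_right _ _
      have h3 : 1 + δ < l ^ (1/θ) / c := by linarith
      calc (1+δ) * c < (l^(1/θ)/c) * c := mul_lt_mul_of_pos_right h3 hc0
        _ = l^(1/θ) := div_mul_cancel₀ _ (ne_of_gt hc0)
    set r : ℝ := (1+δ) * c with hrdef
    have hr0 : 0 < r := by positivity
    have hrl : r ^ θ < l := by
      have := Real.rpow_lt_rpow hr0.le hltc hθ
      rwa [rpow_inv_theta hl hθ.ne'] at this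
    have hcomp : Tendsto (fun x => hazardInv F (r * hazard F x) /
        hazardInv F (hazard F x)) atTop (𝓝 (r ^ θ)) := by
      have h1 := (hg r hr0).comp hHtop
      refine h1.congr fun x => ?_
      simp only [Function.comp_apply]
    have hgd : ∀ᶠ x in atTop, 0 < hazardInv F (hazard F x) :=
      ((inv_top hmono hlt htop).comp hHtop).eventually_gt_atTop 0
    filter_upwards [hHtop.eventually_gt_atTop 0,
      hcomp.eventually (eventually_lt_nhds hrl), hgd,
      hHltop.eventually_gt_atTop (hazard F 0),
      hHtop.eventually_gt_atTop (hazard F 0),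
      hHltop.eventually_gt_atTop 0] with x hH0 hratio hgdpos hHl0 hH00 hHlpos
    have key : hazardInv F (r * hazard F x) <
        l * hazardInv F (hazard F x) := (div_lt_iff₀ hgdpos).1 hratio
    have hxge : hazardInv F (hazard F x) ≤ x := hinv_le hmono hlt hH00 le_rfl
    have hkey2 : hazardInv F (r * hazard F x) < l * x := by nlinarith
    by_contra hcon
    push_neg at hcon
    have hlx : l * x ≤ hazardInv F ((1+δ) * hazard F (l*x)) :=
      le_inv_of_hz_lt hmono hlt htop (by nlinarith)
    have h1 : hazardInv F ((1+δ) * hazard F (l*x)) ≤ hazardInv F (r * hazard F x) := by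
      refine inv_mono hmono hlt htop (x₀ := 0) ?_ ?_
      · nlinarith
      · rw [hrdef, mul_assoc]
        exact mul_le_mul_of_nonneg_left hcon.le (by linarith)
    linarith
  rw [tendsto_order]
  constructor
  · intro a ha
    rcases le_or_gt a 0 with h | h
    · filter_upwards [hHtop.eventually_gt_atTop 0, hHltop.eventually_gt_atTop 0]
        with x h1 h2
      exact lt_of_le_of_lt h (div_pos h2 h1)
    · have hc1 : a < (a + l^(1/θ))/2 := by linarith
      filter_upwards [lower ((a + l^(1/θ))/2) (by linarith) (by linarith),
        hHtop.eventually_gt_atTop 0] with x hls hH0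
      exact hc1.trans_le ((le_div_iff₀ hH0).2 hls)
  · intro a ha
    have hC2 : (l^(1/θ) + a)/2 < a := by linarith
    filter_upwards [upper ((l^(1/θ) + a)/2) (by linarith),
      hHtop.eventually_gt_atTop 0] with x hls hH0
    exact lt_of_le_of_lt ((div_le_iff₀ hH0).2 hls) hC2

end dirB

/-- **Equivalence of the Weibull-tail conditions.**  For a cdf `F` with `F(t) < 1`
for all `t`, and `θ > 0`, the convergence
`log(1−F(λt))/log(1−F(t)) → λ^{1/θ}` for every `λ > 0` is equivalent to the regular
variation of `H⁻` with index `θ`, i.e. `H⁻(t) = t^θ ℓ(t)` for some slowly varying `ℓ`. -/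
theorem weibull_tail_condition_equivalence
    (F : ℝ → ℝ) (hmono : Monotone F) (hlt : ∀ t, F t < 1)
    (htop : Tendsto F atTop (𝓝 1)) (θ : ℝ) (hθ : 0 < θ) :
    (∀ l : ℝ, 0 < l →
      Tendsto (fun t => Real.log (1 - F (l * t)) / Real.log (1 - F t)) atTop
        (𝓝 (l ^ (1 / θ)))) ↔
    (∃ ℓ : ℝ → ℝ, (∀ᶠ t in atTop, 0 < ℓ t) ∧ SlowlyVarying ℓ ∧
      ∀ᶠ t in atTop, hazardInv F t = t ^ θ * ℓ t) := by
  have hconv : ∀ l : ℝ, (fun t => Real.log (1 - F (l * t)) / Real.log (1 - F t)) =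
      fun t => hazard F (l * t) / hazard F t := by
    intro l; funext t; simp [hazard, neg_div_neg_eq]
  constructor
  · intro hlog
    have hH : ∀ l : ℝ, 0 < l →
        Tendsto (fun t => hazard F (l*t) / hazard F t) atTop (𝓝 (l ^ (1/θ))) := by
      intro l hl
      have := hlog l hl
      rwa [hconv l] at this
    have hg := dirA hmono hlt htop hθ hH
    have hgtop := inv_top hmono hlt htop
    refine ⟨fun t => hazardInv F t / t ^ θ, ?_, ?_, ?_⟩
    · filter_upwards [hgtop.eventually_gt_atTop 0, eventually_gt_atTop 0]
        with t h1 h2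
      exact div_pos h1 (Real.rpow_pos_of_pos h2 θ)
    · intro l hl
      have hlθ : 0 < l ^ θ := Real.rpow_pos_of_pos hl θ
      have h1 : Tendsto (fun t => (hazardInv F (l*t) / hazardInv F t) * (1 / l^θ))
          atTop (𝓝 (l^θ * (1/l^θ))) := (hg l hl).mul_const _
      rw [mul_one_div_cancel (ne_of_gt hlθ)] at h1
      refine h1.congr' ?_
      filter_upwards [hgtop.eventually_gt_atTop 0, eventually_gt_atTop 0]
        with t hgt ht
      have htθ : 0 < t ^ θ := Real.rpow_pos_of_pos ht θ
      rw [Real.mul_rpow hl.le ht.le]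
      field_simp
    · filter_upwards [eventually_gt_atTop 0] with t ht
      rw [mul_comm, div_mul_cancel₀ _ (ne_of_gt (Real.rpow_pos_of_pos ht θ))]
  · rintro ⟨ℓ, hpos, hsv, heq⟩ l hl
    have hg : ∀ l' : ℝ, 0 < l' →
        Tendsto (fun t => hazardInv F (l'*t) / hazardInv F t) atTop (𝓝 (l'^θ)) := by
      intro l' hl'
      have h1 : Tendsto (fun t => l'^θ * (ℓ (l'*t) / ℓ t)) atTop (𝓝 (l'^θ * 1)) :=
        tendsto_const_nhds.mul (hsv l' hl')
      rw [mul_one] at h1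
      refine h1.congr' ?_
      filter_upwards [heq, (tendsto_id.const_mul_atTop hl').eventually heq, hpos,
        eventually_gt_atTop 0] with t h1' h2' h3' ht
      simp only [id] at h2'
      rw [h2', h1', Real.mul_rpow hl'.le ht.le]
      have htθ : (0:ℝ) < t ^ θ := Real.rpow_pos_of_pos ht θ
      field_simp
    have := dirB hmono hlt htop hθ hg l hl
    rwa [hconv l]
end

section
/- For the logistic distribution with 1 − F(x) = 2/(1 + e^x): the failure rate is H(x) = log((1+e^x)/2), its generalized inverse is H⁻(t) = log(2e^t − 1) for t > 0, condition (A.1) holds with Weibull tail-coefficient θ = 1 and ℓ(t) = log(2e^t − 1)/t, and condition (A.2) holds with ρ = −1 and b(t) = −log(2)/t; i.e. log(ℓ(λt)/ℓ(t)) ∼ (−log(2)/t)(1 − 1/λ) as t → ∞, uniformly locally in λ > 1. -/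
open Filter Real Topology

section AuxWeibull



open MeasureTheory ProbabilityTheory Filter Set Topology

noncomputable def gfun (t : ℝ) : ℝ := Real.log (2 - Real.exp (-t))

lemma exp_neg_le_one {t : ℝ} (ht : 0 ≤ t) : Real.exp (-t) ≤ 1 :=
  Real.exp_le_one_iff.mpr (by linarith)

lemma two_sub_pos {t : ℝ} (ht : 0 ≤ t) : (1:ℝ) ≤ 2 - Real.exp (-t) := by
  have := exp_neg_le_one ht; linarith

lemma gfun_nonneg {t : ℝ} (ht : 0 ≤ t) : 0 ≤ gfun t :=
  Real.log_nonneg (two_sub_pos ht)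

lemma gfun_le {t : ℝ} (ht : 0 ≤ t) : gfun t ≤ Real.log 2 := by
  have h := Real.exp_pos (-t)
  have h1 := exp_neg_le_one ht
  exact Real.log_le_log (by linarith) (by linarith)

lemma log_split {t : ℝ} (ht : 0 < t) :
    Real.log (2 * Real.exp t - 1) = t + gfun t := by
  have h1 : 2 * Real.exp t - 1 = Real.exp t * (2 - Real.exp (-t)) := by
    rw [mul_sub, ← Real.exp_add]; ring_nf; rw [Real.exp_zero]; ring
  rw [h1, Real.log_mul (Real.exp_pos t).ne' (by have := two_sub_pos ht.le; linarith),
    Real.log_exp, gfun]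

lemma ell_tendsto :
    Tendsto (fun t => Real.log (2 * Real.exp t - 1) / t) atTop (𝓝 1) := by
  have h1 : Tendsto (fun t : ℝ => 1 + gfun t / t) atTop (𝓝 1) := by
    have h2 : Tendsto (fun t : ℝ => gfun t / t) atTop (𝓝 0) := by
      apply tendsto_of_tendsto_of_tendsto_of_le_of_le' tendsto_const_nhds
        (tendsto_const_nhds.div_atTop tendsto_id : Tendsto (fun t : ℝ => Real.log 2 / t) atTop (𝓝 0))
      · filter_upwards [eventually_gt_atTop (0:ℝ)] with t ht
        exact div_nonneg (gfun_nonneg ht.le) ht.le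
      · filter_upwards [eventually_gt_atTop (0:ℝ)] with t ht
        gcongr
        · exact gfun_le ht.le
    have := tendsto_const_nhds.add h2 (f := fun _ : ℝ => (1:ℝ)) (x := atTop)
    simpa using this
  apply h1.congr'
  filter_upwards [eventually_gt_atTop (0:ℝ)] with t ht
  rw [log_split ht, add_div, div_self ht.ne']

lemma hfun_bound {t : ℝ} (ht : 0 ≤ t) : Real.log 2 - gfun t ≤ Real.exp (-t) := by
  have h2 : (1:ℝ) ≤ 2 - Real.exp (-t) := two_sub_pos ht
  have heq : Real.log 2 - gfun t = Real.log (2 / (2 - Real.exp (-t))) := by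
    rw [Real.log_div (by norm_num) (by linarith), gfun]
  rw [heq]
  have hle : Real.log (2 / (2 - Real.exp (-t))) ≤ 2 / (2 - Real.exp (-t)) - 1 :=
    Real.log_le_sub_one_of_pos (by positivity)
  have heq2 : 2 / (2 - Real.exp (-t)) - 1 = Real.exp (-t) / (2 - Real.exp (-t)) := by
    field_simp; ring
  rw [heq2] at hle
  calc Real.log (2 / (2 - Real.exp (-t))) ≤ Real.exp (-t) / (2 - Real.exp (-t)) := hle
    _ ≤ Real.exp (-t) := by
        rw [div_le_iff₀ (by linarith)]
        nlinarith [Real.exp_pos (-t)]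

lemma abs_log_one_add {x : ℝ} (hx : 0 ≤ x) : |Real.log (1 + x) - x| ≤ x ^ 2 := by
  have h1 : Real.log (1 + x) ≤ x := by
    have := Real.log_le_sub_one_of_pos (show (0:ℝ) < 1 + x by linarith); linarith
  have h2 : x - x ^ 2 ≤ Real.log (1 + x) := by
    have hinv : Real.log (1 + x)⁻¹ ≤ (1 + x)⁻¹ - 1 :=
      Real.log_le_sub_one_of_pos (by positivity)
    rw [Real.log_inv] at hinv
    have h3 : x - x ^ 2 ≤ 1 - (1 + x)⁻¹ := by
      have he : 1 - (1 + x)⁻¹ = x / (1 + x) := by field_simp; ring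
      rw [he, le_div_iff₀ (show (0:ℝ) < 1 + x by linarith)]
      nlinarith
    linarith
  rw [abs_le]; constructor <;> nlinarith


lemma Kfun_neg_one {l : ℝ} (hl : 1 ≤ l) : Kfun (-1) l = 1 - 1/l := by
  rw [Kfun, show ((-1:ℝ) - 1) = -2 by norm_num,
    integral_rpow (Or.inr ⟨by norm_num, Set.notMem_uIcc_of_lt one_pos (by linarith)⟩)]
  norm_num
  rw [Real.rpow_neg_one]
  have hl0 : l ≠ 0 := by linarith
  field_simp
  ring

lemma second_order_main (a c : ℝ) (ha : 1 < a) (hac : a ≤ c) (ε : ℝ) (hε : 0 < ε) :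
    ∀ᶠ t : ℝ in atTop, ∀ l ∈ Set.Icc a c,
      |Real.log ((Real.log (2 * Real.exp (l*t) - 1) / (l*t)) /
          (Real.log (2 * Real.exp t - 1) / t)) - (-Real.log 2 / t) * Kfun (-1) l|
        ≤ ε * |(-Real.log 2 / t) * Kfun (-1) l| := by
  have hlog2 : (0:ℝ) < Real.log 2 := Real.log_pos (by norm_num)
  have ha0 : (0:ℝ) < 1 - 1/a := by
    have : 1/a < 1 := by rw [div_lt_one (by linarith)]; linarith
    linarith
  set δ := ε * (Real.log 2 * (1 - 1/a)) with hδdef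
  have hδ : 0 < δ := by positivity
  have htend : Tendsto (fun t : ℝ => 2*(Real.log 2)^2/t + 2*Real.exp (-t)) atTop (𝓝 0) := by
    have h1 : Tendsto (fun t : ℝ => 2*(Real.log 2)^2/t) atTop (𝓝 0) :=
      tendsto_const_nhds.div_atTop tendsto_id
    have h2 : Tendsto (fun t : ℝ => 2*Real.exp (-t)) atTop (𝓝 0) := by
      have := Real.tendsto_exp_neg_atTop_nhds_zero.const_mul (2:ℝ)
      simpa using this
    simpa using h1.add h2
  have hev1 : ∀ᶠ t : ℝ in atTop, 2*(Real.log 2)^2/t + 2*Real.exp (-t) ≤ δ :=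
    htend.eventually_le_const hδ
  filter_upwards [hev1, eventually_ge_atTop (1:ℝ)] with t hEt ht1
  intro l hl
  obtain ⟨hla, hlc⟩ := hl
  have hl1 : 1 < l := lt_of_lt_of_le ha hla
  have ht0 : 0 < t := by linarith
  have hl0 : 0 < l := by linarith
  have hlt0 : 0 < l * t := by positivity
  have hltt : t ≤ l * t := by nlinarith
  have hK : Kfun (-1) l = 1 - 1/l := Kfun_neg_one hl1.le
  set u := gfun t / t with hu
  set v := gfun (l*t) / (l*t) with hv
  have hu0 : 0 ≤ u := div_nonneg (gfun_nonneg ht0.le) ht0.le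
  have hv0 : 0 ≤ v := div_nonneg (gfun_nonneg hlt0.le) hlt0.le
  have hℓt : Real.log (2 * Real.exp t - 1) / t = 1 + u := by
    rw [log_split ht0, add_div, div_self ht0.ne']
  have hℓlt : Real.log (2 * Real.exp (l*t) - 1) / (l*t) = 1 + v := by
    rw [log_split hlt0, add_div, div_self hlt0.ne']
  have hΔ : Real.log ((Real.log (2 * Real.exp (l*t) - 1) / (l*t)) /
      (Real.log (2 * Real.exp t - 1) / t)) = Real.log (1+v) - Real.log (1+u) := by
    rw [hℓt, hℓlt, Real.log_div (by positivity) (by positivity)]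
  set bK := (-Real.log 2 / t) * Kfun (-1) l with hbKdef
  have hbK : bK = Real.log 2/(l*t) - Real.log 2/t := by
    rw [hbKdef, hK]; field_simp; ring
  -- error pieces
  have e1 : |Real.log (1+u) - u| ≤ u^2 := abs_log_one_add hu0
  have e2 : |Real.log (1+v) - v| ≤ v^2 := abs_log_one_add hv0
  have e3 : |(v - u) - bK| ≤ Real.exp (-t)/t + Real.exp (-(l*t))/(l*t) := by
    have hid : (v - u) - bK = (gfun (l*t) - Real.log 2)/(l*t) - (gfun t - Real.log 2)/t := by
      rw [hbK, hu, hv]; field_simp; ring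
    rw [hid]
    have b1 : |(gfun (l*t) - Real.log 2)/(l*t)| ≤ Real.exp (-(l*t))/(l*t) := by
      rw [abs_div, abs_of_pos hlt0,
        abs_of_nonpos (sub_nonpos.mpr (gfun_le hlt0.le)), neg_sub]
      exact div_le_div_of_nonneg_right (hfun_bound hlt0.le) hlt0.le
    have b2 : |(gfun t - Real.log 2)/t| ≤ Real.exp (-t)/t := by
      rw [abs_div, abs_of_pos ht0,
        abs_of_nonpos (sub_nonpos.mpr (gfun_le ht0.le)), neg_sub]
      exact div_le_div_of_nonneg_right (hfun_bound ht0.le) ht0.le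
    calc |(gfun (l*t) - Real.log 2)/(l*t) - (gfun t - Real.log 2)/t|
        ≤ |(gfun (l*t) - Real.log 2)/(l*t)| + |(gfun t - Real.log 2)/t| := abs_sub _ _
      _ ≤ Real.exp (-t)/t + Real.exp (-(l*t))/(l*t) := by linarith
  -- combine
  have key : |Real.log (1+v) - Real.log (1+u) - bK|
      ≤ u^2 + v^2 + (Real.exp (-t)/t + Real.exp (-(l*t))/(l*t)) := by
    have hid : Real.log (1+v) - Real.log (1+u) - bK
        = (Real.log (1+v) - v) - (Real.log (1+u) - u) + ((v - u) - bK) := by ring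
    rw [hid]
    calc |(Real.log (1+v) - v) - (Real.log (1+u) - u) + ((v - u) - bK)|
        ≤ |(Real.log (1+v) - v) - (Real.log (1+u) - u)| + |(v - u) - bK| := abs_add_le _ _
      _ ≤ |Real.log (1+v) - v| + |Real.log (1+u) - u| + |(v - u) - bK| := by
          have := abs_sub (Real.log (1+v) - v) (Real.log (1+u) - u); linarith
      _ ≤ u^2 + v^2 + (Real.exp (-t)/t + Real.exp (-(l*t))/(l*t)) := by linarith
  -- bound RHS by δ/t
  have hub : u ≤ Real.log 2 / t := div_le_div_of_nonneg_right (gfun_le ht0.le) ht0.le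
  have hvb : v ≤ Real.log 2 / (l*t) := div_le_div_of_nonneg_right (gfun_le hlt0.le) hlt0.le
  have hvb2 : v ≤ Real.log 2 / t := hvb.trans (by gcongr)
  have hexp : Real.exp (-(l*t))/(l*t) ≤ Real.exp (-t)/t := by
    calc Real.exp (-(l*t))/(l*t) ≤ Real.exp (-t)/(l*t) := by
          gcongr
      _ ≤ Real.exp (-t)/t := by
          apply div_le_div_of_nonneg_left (Real.exp_pos _).le ht0 hltt
  have hbound : u^2 + v^2 + (Real.exp (-t)/t + Real.exp (-(l*t))/(l*t))
      ≤ (2*(Real.log 2)^2/t + 2*Real.exp (-t)) / t := by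
    have h1 : u^2 ≤ (Real.log 2 / t)^2 := pow_le_pow_left₀ hu0 hub 2
    have h2 : v^2 ≤ (Real.log 2 / t)^2 := pow_le_pow_left₀ hv0 hvb2 2
    have h3 : (2*(Real.log 2)^2/t + 2*Real.exp (-t)) / t
        = 2*(Real.log 2 / t)^2 + 2*(Real.exp (-t)/t) := by field_simp
    rw [h3]
    linarith
  have hδt : (2*(Real.log 2)^2/t + 2*Real.exp (-t)) / t ≤ δ / t := by gcongr
  -- |bK| computation
  have hl1' : (0:ℝ) < 1 - 1/l := by
    have : 1/l < 1 := by rw [div_lt_one hl0]; linarith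
    linarith
  have habs : |bK| = Real.log 2 * (1 - 1/l) / t := by
    rw [hbKdef, hK, abs_mul, abs_div, abs_neg, abs_of_pos hlog2, abs_of_pos ht0,
      abs_of_pos hl1']
    ring
  have hfinal : δ / t ≤ ε * |bK| := by
    have h1l : 1/l ≤ 1/a := div_le_div_of_nonneg_left one_pos.le (by linarith) hla
    rw [habs, hδdef]
    calc ε * (Real.log 2 * (1 - 1/a)) / t ≤ ε * (Real.log 2 * (1 - 1/l)) / t := by
          gcongr
      _ = ε * (Real.log 2 * (1 - 1/l) / t) := by ring
  rw [hΔ]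
  calc |Real.log (1+v) - Real.log (1+u) - bK|
      ≤ u^2 + v^2 + (Real.exp (-t)/t + Real.exp (-(l*t))/(l*t)) := key
    _ ≤ (2*(Real.log 2)^2/t + 2*Real.exp (-t)) / t := hbound
    _ ≤ δ / t := hδt
    _ ≤ ε * |bK| := hfinal

end AuxWeibull

/-- **The logistic distribution is a Weibull tail-distribution.**
For `1 − F(x) = 2/(1+eˣ)`: the failure rate is `H(x) = log((1+eˣ)/2)`, its generalized
inverse is `H⁻(t) = log(2eᵗ − 1)` for `t > 0`, condition (A.1) holds with `θ = 1` and
`ℓ(t) = log(2eᵗ − 1)/t`, and condition (A.2) holds with `ρ = −1` and `b(t) = −log(2)/t`,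
i.e. `log(ℓ(λt)/ℓ(t)) ∼ (−log(2)/t)(1 − 1/λ)` locally uniformly in `λ > 1`. -/
theorem logistic_distribution_weibull_tail :
    let F : ℝ → ℝ := fun x => 1 - 2 / (1 + Real.exp x)
    let ℓ : ℝ → ℝ := fun t => Real.log (2 * Real.exp t - 1) / t
    (∀ x : ℝ, hazard F x = Real.log ((1 + Real.exp x) / 2)) ∧
    (∀ t : ℝ, 0 < t → hazardInv F t = Real.log (2 * Real.exp t - 1)) ∧
    (∀ t : ℝ, 0 < t → hazardInv F t = t ^ (1 : ℝ) * ℓ t) ∧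
    SlowlyVarying ℓ ∧
    SecondOrder ℓ (fun t => -Real.log 2 / t) (-1) := by
  intro F ℓ
  have hazF : ∀ x : ℝ, hazard F x = Real.log ((1 + Real.exp x) / 2) := by
    intro x
    have hx : (0:ℝ) < 1 + Real.exp x := by positivity
    simp only [hazard]
    show -Real.log (1 - (1 - 2/(1+Real.exp x))) = _
    rw [show (1 : ℝ) - (1 - 2/(1+Real.exp x)) = 2/(1+Real.exp x) by ring, ← Real.log_inv]
    congr 1
    field_simp
  have hinv : ∀ t : ℝ, 0 < t → hazardInv F t = Real.log (2 * Real.exp t - 1) := by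
    intro t ht
    have h1 : (1:ℝ) < Real.exp t := Real.one_lt_exp_iff.mpr ht
    have hpos : (0:ℝ) < 2 * Real.exp t - 1 := by linarith
    have hset : {x : ℝ | t ≤ hazard F x} = Set.Ici (Real.log (2*Real.exp t - 1)) := by
      ext x
      have hx : (0:ℝ) < 1 + Real.exp x := by positivity
      simp only [Set.mem_setOf_eq, Set.mem_Ici, hazF x]
      rw [Real.le_log_iff_exp_le (by positivity), Real.log_le_iff_le_exp hpos,
        le_div_iff₀ (by norm_num : (0:ℝ) < 2)]
      constructor <;> intro h <;> linarith
    rw [hazardInv, hset, csInf_Ici]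
  refine ⟨hazF, hinv, ?_, ?_, ?_, ?_⟩
  · intro t ht
    rw [hinv t ht, Real.rpow_one]
    show _ = t * (Real.log (2 * Real.exp t - 1) / t)
    rw [mul_div_cancel₀ _ ht.ne']
  · intro l hl
    show Tendsto (fun t => (Real.log (2 * Real.exp (l*t) - 1) / (l*t)) /
      (Real.log (2 * Real.exp t - 1) / t)) atTop (𝓝 1)
    have h1 : Tendsto (fun t => Real.log (2 * Real.exp (l*t) - 1) / (l*t)) atTop (𝓝 1) :=
      ell_tendsto.comp (tendsto_id.const_mul_atTop hl)
    have := h1.div ell_tendsto one_ne_zero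
    rw [div_one] at this; exact this
  · show Tendsto (fun t : ℝ => -Real.log 2 / t) atTop (𝓝 0)
    exact tendsto_const_nhds.div_atTop tendsto_id
  · intro a c ha hac ε hε
    exact second_order_main a c ha hac ε hε
end
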